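/- arXiv:1702.08274 — 6 statements merged into one kernel-verified Lean document; each statement's English description precedes it below -/
import Mathlib

section
/- Let F be an entire function with ‖F‖_{𝓛₁} := ∫_ℂ |F(z)| e^{-π|z|²/2} dA(z) < ∞, let Δ ⊆ ℂ be measurable, and let R > 0. Then ∫_Δ |F(z)| e^{-π|z|²/2} dA(z) ≤ ρ(Δ, R)/(1 - e^{-π/R²}) · ‖F‖_{𝓛₁}, where ρ(Δ, R) = sup_{w ∈ ℂ} |Δ ∩ (w + D_{1/R})|. -/
open MeasureTheory Set Real intervalIntegral

lemma circle_mean (H : ℂ → ℂ) (hH : Differentiable ℂ H) (c : ℂ) (s : ℝ) (hs : 0 < s) :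
    2 * π * ‖H c‖ ≤ ∫ θ in Ioo (-π) π, ‖H (circleMap c s θ)‖ := by
  have hC : (∮ z in C(c, s), (z - c)⁻¹ • H z) = (2 * π * Complex.I : ℂ) • H c :=
    Complex.circleIntegral_sub_center_inv_smul_of_differentiable_on_off_countable hs
      Set.countable_empty (hH.continuous.continuousOn)
      (fun z _ => hH.differentiableAt)
  have h1 : ‖(2 * π * Complex.I : ℂ) • H c‖ = 2 * π * ‖H c‖ := by
    simp [norm_smul, abs_of_pos Real.pi_pos, mul_assoc]
  have h2 : ‖∮ z in C(c, s), (z - c)⁻¹ • H z‖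
      ≤ ∫ θ in (0:ℝ)..(2*π), ‖H (circleMap c s θ)‖ := by
    rw [circleIntegral]
    refine le_trans (intervalIntegral.norm_integral_le_integral_norm Real.two_pi_pos.le) ?_
    apply le_of_eq
    refine intervalIntegral.integral_congr fun θ _ => ?_
    rw [deriv_circleMap]
    rw [norm_smul, norm_smul]
    have h3 : circleMap c s θ - c = circleMap 0 s θ := by simp [circleMap]
    rw [h3]
    have hne : ‖circleMap 0 s θ‖ = s := by
      simp [circleMap, abs_of_pos hs]
    rw [norm_inv]
    simp only [norm_mul, hne, Complex.norm_I, mul_one]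
    field_simp
  have h4 : (∫ θ in (0:ℝ)..(2*π), ‖H (circleMap c s θ)‖)
      = ∫ θ in Ioo (-π) π, ‖H (circleMap c s θ)‖ := by
    have hper : Function.Periodic (fun θ => ‖H (circleMap c s θ)‖) (2*π) :=
      fun θ => by simp [(periodic_circleMap c s) θ]
    have := hper.intervalIntegral_add_eq 0 (-π)
    simp only [zero_add] at this
    rw [this]
    have hpi : -π + 2*π = π := by ring
    rw [hpi, intervalIntegral.integral_of_le (by linarith [Real.pi_pos] : -π ≤ π),
      integral_Ioc_eq_integral_Ioo]
  calc 2 * π * ‖H c‖ = ‖(2 * π * Complex.I : ℂ) • H c‖ := h1.symm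
    _ = ‖∮ z in C(c, s), (z - c)⁻¹ • H z‖ := by rw [hC]
    _ ≤ _ := h2.trans_eq h4

lemma key_disc (F : ℂ → ℂ) (hF : Differentiable ℂ F) {r : ℝ} (hr : 0 < r) (w : ℂ) :
    (1 - Real.exp (-π * r ^ 2)) * (‖F w‖ * Real.exp (-π * ‖w‖ ^ 2 / 2))
      ≤ ∫ z in Metric.closedBall w r,
          ‖F z‖ * Real.exp (-π * ‖z‖ ^ 2 / 2) := by
  set H : ℂ → ℂ := fun z =>
    F z * Complex.exp (((π:ℝ)/2 : ℝ) * (starRingEnd ℂ w * w) - (π:ℝ) * (starRingEnd ℂ w * z))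
    with hHdef
  have hH : Differentiable ℂ H := by
    apply hF.mul
    apply Complex.differentiable_exp.comp
    apply Differentiable.sub (differentiable_const _)
    exact (differentiable_id.const_mul _).const_mul _
  have hHcont : Continuous H := hH.continuous
  have hHid : ∀ z, ‖H z‖ * Real.exp (-π * ‖z - w‖ ^ 2 / 2)
      = ‖F z‖ * Real.exp (-π * ‖z‖ ^ 2 / 2) := by
    intro z
    rw [hHdef]
    simp only []
    rw [norm_mul, Complex.norm_exp, mul_assoc, ← Real.exp_add]
    congr 1
    rw [Complex.sq_norm, Complex.sq_norm]
    simp only [Complex.sub_re, Complex.mul_re, Complex.mul_im, Complex.ofReal_re,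
      Complex.ofReal_im, Complex.conj_re, Complex.conj_im, Complex.normSq_apply, Complex.sub_im]
    ring_nf
  have hHw : ‖H w‖ = ‖F w‖ * Real.exp (-π * ‖w‖ ^ 2 / 2) := by
    have := hHid w
    simpa using this
  -- the integrand as a function
  set G : ℂ → ℝ := fun z => ‖F z‖ * Real.exp (-π * ‖z‖ ^ 2 / 2) with hGdef
  -- step B: translation
  have stepB : (∫ z in Metric.closedBall w r, G z)
      = ∫ u : ℂ, (Metric.closedBall (0:ℂ) r).indicator (fun u => G (w + u)) u := by
    rw [← MeasureTheory.integral_indicator (measurableSet_closedBall)]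
    rw [← integral_add_left_eq_self _ w]
    congr 1
    ext u
    have : w + u ∈ Metric.closedBall w r ↔ u ∈ Metric.closedBall (0:ℂ) r := by
      simp [Metric.mem_closedBall, dist_eq_norm]
    by_cases hu : u ∈ Metric.closedBall (0:ℂ) r
    · rw [Set.indicator_of_mem hu, Set.indicator_of_mem (this.mpr hu)]
    · rw [Set.indicator_of_notMem hu, Set.indicator_of_notMem (fun h => hu (this.mp h))]
  -- step C: polar coordinates
  set φ : ℂ → ℝ := fun u => ‖H (w + u)‖ * Real.exp (-π * ‖u‖ ^ 2 / 2)
    with hφdef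
  have hGφ : ∀ u : ℂ, G (w + u) = φ u := by
    intro u
    have h := hHid (w + u)
    rw [add_sub_cancel_left] at h
    simp only [hGdef, hφdef]
    exact h.symm
  set ψ : ℝ × ℝ → ℝ := fun p =>
    p.1 * (‖H (circleMap w p.1 p.2)‖ * Real.exp (-π * p.1 ^ 2 / 2)) with hψdef
  set T' : Set (ℝ × ℝ) := Ioc 0 r ×ˢ Ioo (-π) π with hT'def
  have hT'meas : MeasurableSet T' := measurableSet_Ioc.prod measurableSet_Ioo
  have hT'sub : T' ⊆ polarCoord.target := by
    rw [hT'def]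
    exact Set.prod_mono Ioc_subset_Ioi_self subset_rfl
  have stepC : (∫ u : ℂ, (Metric.closedBall (0:ℂ) r).indicator (fun u => G (w + u)) u)
      = ∫ p in T', ψ p := by
    have hind : (Metric.closedBall (0:ℂ) r).indicator (fun u => G (w + u))
        = (Metric.closedBall (0:ℂ) r).indicator φ := by
      ext u; by_cases hu : u ∈ Metric.closedBall (0:ℂ) r
      · rw [Set.indicator_of_mem hu, Set.indicator_of_mem hu, hGφ]
      · rw [Set.indicator_of_notMem hu, Set.indicator_of_notMem hu]
    rw [hind, ← Complex.integral_comp_polarCoord_symm]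
    have hcongr : ∀ p ∈ polarCoord.target,
        p.1 • (Metric.closedBall (0:ℂ) r).indicator φ (Complex.polarCoord.symm p)
          = T'.indicator ψ p := by
      rintro ⟨s, θ⟩ hp
      have hs : 0 < s := hp.1
      have hθ : θ ∈ Ioo (-π) π := hp.2
      have habs : ‖Complex.polarCoord.symm (s, θ)‖ = s := by
        rw [Complex.norm_polarCoord_symm]
        exact abs_of_pos hs
      have hcm : w + Complex.polarCoord.symm (s, θ) = circleMap w s θ := by
        rw [Complex.polarCoord_symm_apply, circleMap, Complex.exp_mul_I,
          Complex.ofReal_cos, Complex.ofReal_sin]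
      by_cases hsr : s ≤ r
      · have hmem : Complex.polarCoord.symm (s, θ) ∈ Metric.closedBall (0:ℂ) r := by
          rw [Metric.mem_closedBall, dist_zero_right, habs]
          exact hsr
        have hmem' : ((s, θ) : ℝ × ℝ) ∈ T' := ⟨⟨hs, hsr⟩, hθ⟩
        rw [Set.indicator_of_mem hmem, Set.indicator_of_mem hmem', hφdef, hψdef]
        simp only [smul_eq_mul]
        rw [hcm, habs]
      · have hmem : Complex.polarCoord.symm (s, θ) ∉ Metric.closedBall (0:ℂ) r := by
          rw [Metric.mem_closedBall, dist_zero_right, habs]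
          exact hsr
        have hmem' : ((s, θ) : ℝ × ℝ) ∉ T' := fun h => hsr h.1.2
        rw [Set.indicator_of_notMem hmem, Set.indicator_of_notMem hmem', smul_zero]
    rw [setIntegral_congr_fun polarCoord.open_target.measurableSet hcongr,
      MeasureTheory.setIntegral_indicator hT'meas,
      Set.inter_eq_self_of_subset_right hT'sub]
  -- continuity of ψ
  have hψcont : Continuous ψ := by
    rw [hψdef]
    apply continuous_fst.mul
    apply Continuous.mul
    · apply continuous_norm.comp
      apply hHcont.comp
      unfold circleMap
      fun_prop
    · fun_prop
  have hψint : IntegrableOn ψ T' := by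
    apply (hψcont.continuousOn.integrableOn_compact (isCompact_Icc.prod isCompact_Icc)).mono_set
    rw [hT'def]
    exact Set.prod_mono Ioc_subset_Icc_self Ioo_subset_Icc_self
  -- step D: Fubini
  have stepD : (∫ p in T', ψ p) = ∫ s in Ioc 0 r, ∫ θ in Ioo (-π) π, ψ (s, θ) := by
    rw [hT'def] at hψint ⊢
    rw [Measure.volume_eq_prod] at hψint ⊢
    rw [MeasureTheory.setIntegral_prod ψ hψint]
  -- step E: inner bound
  have stepE : ∀ s ∈ Ioc (0:ℝ) r,
      2 * π * ‖H w‖ * (s * Real.exp (-π * s ^ 2 / 2))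
        ≤ ∫ θ in Ioo (-π) π, ψ (s, θ) := by
    rintro s ⟨hs0, hsr⟩
    have hinner : (∫ θ in Ioo (-π) π, ψ (s, θ))
        = s * Real.exp (-π * s ^ 2 / 2) * ∫ θ in Ioo (-π) π, ‖H (circleMap w s θ)‖ := by
      rw [← MeasureTheory.integral_const_mul]
      refine setIntegral_congr_fun measurableSet_Ioo fun θ _ => ?_
      rw [hψdef]; ring
    rw [hinner]
    have := circle_mean H hH w s hs0
    have hfac : 0 ≤ s * Real.exp (-π * s ^ 2 / 2) := by positivity
    calc 2 * π * ‖H w‖ * (s * Real.exp (-π * s ^ 2 / 2))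
        = s * Real.exp (-π * s ^ 2 / 2) * (2 * π * ‖H w‖) := by ring
      _ ≤ _ := mul_le_mul_of_nonneg_left this hfac
  -- step F+G: outer integral
  have hlhs_int : IntegrableOn (fun s => ∫ θ in Ioo (-π) π, ψ (s, θ)) (Ioc 0 r) := by
    rw [hT'def] at hψint
    rw [IntegrableOn, Measure.volume_eq_prod, ← Measure.prod_restrict] at hψint
    exact hψint.integral_prod_left
  have hrhs_int : IntegrableOn
      (fun s => 2 * π * ‖H w‖ * (s * Real.exp (-π * s ^ 2 / 2))) (Ioc 0 r) := by
    apply Continuous.integrableOn_Ioc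
    fun_prop
  have stepF : (∫ s in Ioc (0:ℝ) r, 2 * π * ‖H w‖ * (s * Real.exp (-π * s ^ 2 / 2)))
      ≤ ∫ s in Ioc 0 r, ∫ θ in Ioo (-π) π, ψ (s, θ) :=
    setIntegral_mono_on hrhs_int hlhs_int measurableSet_Ioc stepE
  -- step G: compute the s-integral
  have stepG : (∫ s in Ioc (0:ℝ) r, s * Real.exp (-π * s ^ 2 / 2))
      = (1 - Real.exp (-π * r ^ 2 / 2)) / π := by
    rw [← intervalIntegral.integral_of_le hr.le]
    have hderiv : ∀ s ∈ Set.uIcc (0:ℝ) r, HasDerivAt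
        (fun t => -(1/π) * Real.exp (-π * t ^ 2 / 2)) (s * Real.exp (-π * s ^ 2 / 2)) s := by
      intro s _
      have h1 : HasDerivAt (fun t : ℝ => -π * t ^ 2 / 2) (-π * s) s := by
        have : HasDerivAt (fun y : ℝ => -π / 2 * y ^ 2) _ s := (hasDerivAt_pow 2 s).const_mul (-π / 2)
        convert this using 1
        · ext t; ring
        · norm_num; ring
      have h2 : HasDerivAt (fun t => -(1/π) * Real.exp (-π * t ^ 2 / 2)) _ s := (h1.exp).const_mul (-(1/π))
      convert h2 using 1
      have hπinv : π * π⁻¹ = 1 := mul_inv_cancel₀ Real.pi_ne_zero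
      linear_combination (-(s * Real.exp (-π * s ^ 2 / 2))) * hπinv
    rw [intervalIntegral.integral_eq_sub_of_hasDerivAt hderiv
      (by apply Continuous.intervalIntegrable; fun_prop)]
    norm_num
    field_simp
    ring
  -- put everything together
  have hHwnn : 0 ≤ ‖H w‖ := norm_nonneg _
  have final : (1 - Real.exp (-π * r ^ 2)) * ‖H w‖
      ≤ 2 * π * ‖H w‖ * ((1 - Real.exp (-π * r ^ 2 / 2)) / π) := by
    have ha1 : Real.exp (-π * r ^ 2 / 2) ≤ 1 := by
      apply Real.exp_le_one_iff.mpr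
      nlinarith [Real.pi_pos, sq_nonneg r]
    have ha2 : Real.exp (-π * r ^ 2) = Real.exp (-π * r ^ 2 / 2) * Real.exp (-π * r ^ 2 / 2) := by
      rw [← Real.exp_add]; congr 1; ring
    have hπ := Real.pi_pos
    have h2π : 2 * π * ‖H w‖ * ((1 - Real.exp (-π * r ^ 2 / 2)) / π)
        = 2 * (1 - Real.exp (-π * r ^ 2 / 2)) * ‖H w‖ := by
      field_simp
    rw [ha2, h2π]
    have hexp_pos : 0 < Real.exp (-π * r ^ 2 / 2) := Real.exp_pos _
    nlinarith [mul_le_mul_of_nonneg_right ha1 hHwnn]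
  calc (1 - Real.exp (-π * r ^ 2)) * (‖F w‖ * Real.exp (-π * ‖w‖ ^ 2 / 2))
      = (1 - Real.exp (-π * r ^ 2)) * ‖H w‖ := by rw [hHw]
    _ ≤ 2 * π * ‖H w‖ * ((1 - Real.exp (-π * r ^ 2 / 2)) / π) := final
    _ = ∫ s in Ioc (0:ℝ) r, 2 * π * ‖H w‖ * (s * Real.exp (-π * s ^ 2 / 2)) := by
        rw [MeasureTheory.integral_const_mul, stepG]
    _ ≤ ∫ s in Ioc 0 r, ∫ θ in Ioo (-π) π, ψ (s, θ) := stepF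
    _ = ∫ p in T', ψ p := stepD.symm
    _ = ∫ u : ℂ, (Metric.closedBall (0:ℂ) r).indicator (fun u => G (w + u)) u := stepC.symm
    _ = ∫ z in Metric.closedBall w r, G z := stepB.symm


/-- Planar maximum Nyquist density (the plane identified with `ℂ`). -/
noncomputable def planarRho (Δ : Set ℂ) (R : ℝ) : ENNReal :=
  ⨆ z : ℂ, volume (Δ ∩ Metric.closedBall z (1 / R))

/-- Planar large sieve inequality in Fock space (Theorem 1, Fock form):
`∫_Δ |F| e^{-π|z|²/2} dA ≤ ρ(Δ,R)/(1 - e^{-π/R²}) · ‖F‖_{𝓛₁}`. -/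
theorem planar_large_sieve_fock (F : ℂ → ℂ) (hF : Differentiable ℂ F)
    (hF1 : Integrable (fun z : ℂ => ‖F z‖ * Real.exp (-Real.pi * ‖z‖ ^ 2 / 2)))
    (Δ : Set ℂ) (hΔ : MeasurableSet Δ) (R : ℝ) (hR : 0 < R) :
    ∫ z in Δ, ‖F z‖ * Real.exp (-Real.pi * ‖z‖ ^ 2 / 2)
      ≤ (planarRho Δ R).toReal / (1 - Real.exp (-Real.pi / R ^ 2)) *
        ∫ z : ℂ, ‖F z‖ * Real.exp (-Real.pi * ‖z‖ ^ 2 / 2) := by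
  set G : ℂ → ℝ := fun z => ‖F z‖ * Real.exp (-π * ‖z‖ ^ 2 / 2) with hGdef
  have hGcont : Continuous G := by
    apply Continuous.mul
    · exact continuous_norm.comp hF.continuous
    · exact Real.continuous_exp.comp
        ((continuous_const.mul (continuous_norm.pow 2)).div_const 2)
  have hGnn : ∀ z, 0 ≤ G z := fun z => by positivity
  set r : ℝ := 1 / R with hrdef
  have hr : 0 < r := by positivity
  set c : ℝ := 1 - Real.exp (-π / R ^ 2) with hcdef
  have hexp : -π * r ^ 2 = -π / R ^ 2 := by rw [hrdef]; field_simp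
  have hc : 0 < c := by
    rw [hcdef]
    have hneg : -π / R ^ 2 < 0 := by
      apply div_neg_of_neg_of_pos
      · linarith [Real.pi_pos]
      · positivity
    linarith [Real.exp_lt_one_iff.mpr hneg]
  have key : ∀ w : ℂ, c * G w ≤ ∫ z in Metric.closedBall w r, G z := by
    intro w
    have := key_disc F hF hr w
    rw [hexp] at this
    exact this
  set G' : ℂ → ENNReal := fun z => ENNReal.ofReal (G z) with hG'def
  have hG'meas : Measurable G' := (ENNReal.measurable_ofReal.comp hGcont.measurable)
  set ρ : ENNReal := planarRho Δ R with hρdef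
  -- pointwise ≤ in ENNReal
  have hball_int : ∀ w : ℂ, IntegrableOn G (Metric.closedBall w r) := fun w => hF1.integrableOn
  have hofReal_ball : ∀ w : ℂ, ENNReal.ofReal (∫ z in Metric.closedBall w r, G z)
      = ∫⁻ z in Metric.closedBall w r, G' z := fun w =>
    MeasureTheory.ofReal_integral_eq_lintegral_ofReal (hball_int w)
      (Filter.Eventually.of_forall fun z => hGnn z)
  -- the kernel
  set k : ℂ × ℂ → ENNReal := fun p =>
    ({q : ℂ × ℂ | dist q.1 q.2 ≤ r}).indicator (fun q => G' q.2) p with hkdef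
  have hkmeas : Measurable k := by
    apply Measurable.indicator (hG'meas.comp measurable_snd)
    exact measurableSet_le (by fun_prop) measurable_const
  have hk1 : ∀ w z : ℂ, k (w, z) = (Metric.closedBall w r).indicator G' z := by
    intro w z
    by_cases h : dist w z ≤ r <;>
      simp [hkdef, Set.indicator_apply, Metric.mem_closedBall, dist_comm, h]
  have hk2 : ∀ w z : ℂ, k (w, z) = (Metric.closedBall z r).indicator (fun _ => G' z) w := by
    intro w z
    by_cases h : dist w z ≤ r <;>
      simp [hkdef, Set.indicator_apply, Metric.mem_closedBall, h]
  -- main ENNReal chain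
  have chain : ENNReal.ofReal c * ∫⁻ z in Δ, G' z ≤ ρ * ∫⁻ z, G' z := by
    calc ENNReal.ofReal c * ∫⁻ z in Δ, G' z
        = ∫⁻ w in Δ, ENNReal.ofReal c * G' w := by rw [lintegral_const_mul _ hG'meas]
      _ ≤ ∫⁻ w in Δ, ∫⁻ z, k (w, z) := by
          refine lintegral_mono fun w => ?_
          calc ENNReal.ofReal c * G' w = ENNReal.ofReal (c * G w) := by
                simp only [hG'def]
                exact (ENNReal.ofReal_mul hc.le).symm
            _ ≤ ENNReal.ofReal (∫ z in Metric.closedBall w r, G z) :=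
                ENNReal.ofReal_le_ofReal (key w)
            _ = ∫⁻ z in Metric.closedBall w r, G' z := hofReal_ball w
            _ = ∫⁻ z, k (w, z) := by
                rw [← lintegral_indicator measurableSet_closedBall]
                exact lintegral_congr fun z => (hk1 w z).symm
      _ = ∫⁻ z, ∫⁻ w in Δ, k (w, z) := lintegral_lintegral_swap hkmeas.aemeasurable
      _ ≤ ∫⁻ z, G' z * ρ := by
          refine lintegral_mono fun z => ?_
          calc (∫⁻ w in Δ, k (w, z))
              = ∫⁻ w in Δ, (Metric.closedBall z r).indicator (fun _ => G' z) w :=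
                lintegral_congr fun w => by rw [hk2]
            _ = ∫⁻ w in Metric.closedBall z r, G' z ∂(volume.restrict Δ) :=
                lintegral_indicator measurableSet_closedBall _
            _ = G' z * (volume.restrict Δ) (Metric.closedBall z r) := by
                rw [setLIntegral_const]
            _ = G' z * volume (Δ ∩ Metric.closedBall z r) := by
                rw [Measure.restrict_apply measurableSet_closedBall, Set.inter_comm]
            _ ≤ G' z * ρ := by
                apply mul_le_mul_right
                rw [hρdef, planarRho, hrdef]
                exact le_iSup (fun z : ℂ => volume (Δ ∩ Metric.closedBall z (1 / R))) z
      _ = ρ * ∫⁻ z, G' z := by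
          rw [lintegral_mul_const _ hG'meas, mul_comm]
  -- convert back to real
  have hint_eq : ENNReal.ofReal (∫ z, G z) = ∫⁻ z, G' z :=
    MeasureTheory.ofReal_integral_eq_lintegral_ofReal hF1
      (Filter.Eventually.of_forall fun z => hGnn z)
  have hintΔ_eq : ENNReal.ofReal (∫ z in Δ, G z) = ∫⁻ z in Δ, G' z :=
    MeasureTheory.ofReal_integral_eq_lintegral_ofReal hF1.integrableOn
      (Filter.Eventually.of_forall fun z => hGnn z)
  have hρfin : ρ < ⊤ := by
    rw [hρdef, planarRho]
    calc (⨆ z : ℂ, volume (Δ ∩ Metric.closedBall z (1 / R)))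
        ≤ volume (Metric.closedBall (0:ℂ) (1 / R)) := by
          apply iSup_le
          intro z
          calc volume (Δ ∩ Metric.closedBall z (1 / R))
              ≤ volume (Metric.closedBall z (1 / R)) := measure_mono Set.inter_subset_right
            _ = volume (Metric.closedBall (0:ℂ) (1 / R)) :=
                Measure.addHaar_closedBall_center volume z (1 / R)
      _ < ⊤ := measure_closedBall_lt_top
  rw [← hintΔ_eq, ← hint_eq] at chain
  have hIΔnn : 0 ≤ ∫ z in Δ, G z := integral_nonneg hGnn
  have hInn : 0 ≤ ∫ z, G z := integral_nonneg hGnn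
  have chain' : c * ∫ z in Δ, G z ≤ ρ.toReal * ∫ z, G z := by
    have h1 := ENNReal.toReal_mono ?_ chain
    · rw [← ENNReal.ofReal_mul hc.le, ENNReal.toReal_ofReal (by positivity)] at h1
      rw [ENNReal.toReal_mul, ENNReal.toReal_ofReal hInn] at h1
      exact h1
    · exact ENNReal.mul_ne_top hρfin.ne (by simp)
  rw [div_mul_eq_mul_div, le_div_iff₀ hc]
  calc (∫ z in Δ, G z) * c = c * ∫ z in Δ, G z := by ring
    _ ≤ ρ.toReal * ∫ z, G z := chain'
end

section
/- If Δ ⊆ ℂ is measurable and there exists R > 0 such that ρ(Δ, R) < (1 - e^{-π/R²})/2, then for every nonzero F ∈ 𝓕₁(ℂ), ∫_Δ |F(z)| e^{-π|z|²/2} dA(z) < ∫_{Δᶜ} |F(z)| e^{-π|z|²/2} dA(z). -/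
open MeasureTheory Metric Set Real

lemma circle_submean (f : ℂ → ℂ) (hf : Differentiable ℂ f) (c : ℂ) {s : ℝ} (hs : 0 < s) :
    2 * Real.pi * ‖f c‖ ≤ ∫ θ in (0 : ℝ)..(2 * Real.pi), ‖f (circleMap c s θ)‖ := by
  have hC : (∮ z in C(c, s), (z - c)⁻¹ • f z) = (2 * Real.pi * Complex.I : ℂ) • f c :=
    Complex.circleIntegral_sub_center_inv_smul_of_differentiable_on_off_countable hs
      Set.countable_empty (hf.continuous.continuousOn)
      (fun z _ => hf.differentiableAt)
  have hI : (∮ z in C(c, s), (z - c)⁻¹ • f z)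
      = Complex.I • ∫ θ in (0 : ℝ)..(2 * Real.pi), f (circleMap c s θ) := by
    rw [circleIntegral, ← intervalIntegral.integral_smul]
    refine intervalIntegral.integral_congr fun θ _ => ?_
    have hne : circleMap 0 s θ ≠ 0 := by
      simpa using circleMap_ne_center (c := (0:ℂ)) hs.ne' (θ := θ)
    simp only [deriv_circleMap, circleMap_sub_center, smul_eq_mul]
    field_simp
  have key : (∫ θ in (0 : ℝ)..(2 * Real.pi), f (circleMap c s θ)) = (2 * Real.pi : ℝ) • f c := by
    have := hC.symm.trans hI
    have h2 : (2 * Real.pi * Complex.I : ℂ) • f c = Complex.I • ((2 * Real.pi : ℝ) • f c) := by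
      simp [smul_smul]; ring
    rw [h2] at this
    exact (smul_right_injective ℂ (by simp : (Complex.I : ℂ) ≠ 0) this).symm
  have hb : (0:ℝ) ≤ 2 * Real.pi := by positivity
  calc 2 * Real.pi * ‖f c‖
      = ‖∫ θ in (0 : ℝ)..(2 * Real.pi), f (circleMap c s θ)‖ := by
        rw [key]; simp [norm_smul, abs_of_nonneg Real.pi_pos.le]
    _ ≤ ∫ θ in (0 : ℝ)..(2 * Real.pi), ‖f (circleMap c s θ)‖ :=
        intervalIntegral.norm_integral_le_integral_norm hb
    _ = ∫ θ in (0 : ℝ)..(2 * Real.pi), ‖f (circleMap c s θ)‖ := by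
        simp

lemma psi_eq_circleMap (s θ : ℝ) :
    Complex.polarCoord.symm (s, θ) = circleMap 0 s θ := by
  simp [circleMap, Complex.exp_mul_I, mul_add]

lemma radial_integral (r : ℝ) :
    ∫ s in (0:ℝ)..r, s * Real.exp (-Real.pi * s ^ 2 / 2)
      = (1 - Real.exp (-Real.pi * r ^ 2 / 2)) / Real.pi := by
  have h : ∀ s ∈ Set.uIcc (0:ℝ) r, HasDerivAt
      (fun t : ℝ => -(1 / Real.pi) * Real.exp (-Real.pi * t ^ 2 / 2))
      (s * Real.exp (-Real.pi * s ^ 2 / 2)) s := by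
    intro s _
    have h1 : HasDerivAt (fun t : ℝ => -Real.pi * t ^ 2 / 2) (-Real.pi * s) s := by
      have := ((hasDerivAt_pow 2 s).const_mul (-Real.pi)).div_const 2
      refine this.congr_deriv ?_
      ring
    have h2 := (h1.exp).const_mul (-(1 / Real.pi))
    refine h2.congr_deriv ?_
    field_simp
  rw [intervalIntegral.integral_eq_sub_of_hasDerivAt h]
  · field_simp
    simp only [ne_eq, OfNat.ofNat_ne_zero, not_false_eq_true, zero_pow, mul_zero, zero_div, neg_zero, Real.exp_zero]
    ring
  · apply Continuous.intervalIntegrable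
    continuity

lemma disc_weighted_submean (H : ℂ → ℂ) (hH : Differentiable ℂ H) {r : ℝ} (hr : 0 < r) :
    2 * (1 - Real.exp (-Real.pi * r ^ 2 / 2)) * ‖H 0‖
      ≤ ∫ z in closedBall (0:ℂ) r,
          ‖H z‖ * Real.exp (-Real.pi * ‖z‖ ^ 2 / 2) := by
  set u : ℂ → ℝ := fun z => ‖H z‖ * Real.exp (-Real.pi * ‖z‖ ^ 2 / 2) with hu
  set φ : ℝ × ℝ → ℝ := fun p =>
    p.1 * (‖H (circleMap 0 p.1 p.2)‖ * Real.exp (-Real.pi * p.1 ^ 2 / 2)) with hφ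
  have hφc : Continuous φ := by
    apply continuous_fst.mul
    apply Continuous.mul
    · exact continuous_norm.comp (hH.continuous.comp (by unfold circleMap; fun_prop))
    · fun_prop
  set S : Set (ℝ × ℝ) := Ioc 0 r ×ˢ Ioo (-Real.pi) Real.pi with hS
  -- polar coordinates
  have h1 : ∫ z in closedBall (0:ℂ) r, u z = ∫ z, (closedBall (0:ℂ) r).indicator u z :=
    (integral_indicator (measurableSet_closedBall)).symm
  have h2 : ∫ z, (closedBall (0:ℂ) r).indicator u z
      = ∫ p in polarCoord.target, p.1 • (closedBall (0:ℂ) r).indicator u (Complex.polarCoord.symm p) :=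
    (Complex.integral_comp_polarCoord_symm _).symm
  have h3 : ∫ p in polarCoord.target, p.1 • (closedBall (0:ℂ) r).indicator u (Complex.polarCoord.symm p)
      = ∫ p in polarCoord.target, S.indicator φ p := by
    apply setIntegral_congr_fun (polarCoord.open_target.measurableSet)
    intro p hp
    rw [polarCoord_target] at hp
    obtain ⟨hp1, hp2⟩ := hp
    simp only [mem_Ioi] at hp1
    have habs : ‖Complex.polarCoord.symm p‖ = p.1 := by
      rw [Complex.norm_polarCoord_symm, abs_of_pos hp1]
    show p.1 • (closedBall (0:ℂ) r).indicator u (Complex.polarCoord.symm p) = S.indicator φ p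
    by_cases hle : p.1 ≤ r
    · have hmem : Complex.polarCoord.symm p ∈ closedBall (0:ℂ) r := by
        rw [mem_closedBall, Complex.dist_eq, sub_zero, habs]; exact hle
      have hmemS : p ∈ S := ⟨⟨hp1, hle⟩, hp2⟩
      rw [indicator_of_mem hmem, indicator_of_mem hmemS]
      have heq : Complex.polarCoord.symm p = circleMap 0 p.1 p.2 := by
        rw [← psi_eq_circleMap]
      rw [hu, hφ]
      simp only [smul_eq_mul, habs, heq, norm_circleMap_zero, abs_of_pos hp1]
    · have hmem : Complex.polarCoord.symm p ∉ closedBall (0:ℂ) r := by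
        rw [mem_closedBall, Complex.dist_eq, sub_zero, habs]; exact hle
      have hmemS : p ∉ S := fun h => hle h.1.2
      rw [indicator_of_notMem hmem, indicator_of_notMem hmemS, smul_zero]
  have hSsub : S ⊆ polarCoord.target := by
    rw [polarCoord_target]
    exact prod_mono (Ioc_subset_Ioi_self) (subset_rfl)
  have hSm : MeasurableSet S := (measurableSet_Ioc).prod measurableSet_Ioo
  have h4 : ∫ p in polarCoord.target, S.indicator φ p = ∫ p in S, φ p := by
    rw [setIntegral_indicator hSm, inter_eq_self_of_subset_right hSsub]
  -- Fubini
  have hint : IntegrableOn φ S := by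
    apply IntegrableOn.mono_set (t := Icc (0, -Real.pi) (r, Real.pi))
    · exact hφc.continuousOn.integrableOn_compact isCompact_Icc
    · rw [Icc_prod_eq]
      exact prod_mono (Ioc_subset_Icc_self) (Ioo_subset_Icc_self)
  have h5 : ∫ p in S, φ p = ∫ s in Ioc (0:ℝ) r, ∫ θ in Ioo (-Real.pi) Real.pi, φ (s, θ) := by
    rw [hS]
    exact setIntegral_prod φ hint
  -- lower bound the inner integral
  have key : ∀ s ∈ Ioc (0:ℝ) r,
      (s * Real.exp (-Real.pi * s ^ 2 / 2)) * (2 * Real.pi * ‖H 0‖)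
        ≤ ∫ θ in Ioo (-Real.pi) Real.pi, φ (s, θ) := by
    intro s hs
    have hs0 : 0 < s := hs.1
    have hA : ∫ θ in Ioo (-Real.pi) Real.pi, φ (s, θ)
        = (s * Real.exp (-Real.pi * s ^ 2 / 2))
          * ∫ θ in Ioo (-Real.pi) Real.pi, ‖H (circleMap 0 s θ)‖ := by
      rw [← integral_const_mul]
      congr 1 with θ
      rw [hφ]
      ring
    have hper : Function.Periodic (fun θ => ‖H (circleMap 0 s θ)‖) (2 * Real.pi) :=
      fun θ => by simp only [(periodic_circleMap 0 s) θ]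
    have hIoo : ∫ θ in Ioo (-Real.pi) Real.pi, ‖H (circleMap 0 s θ)‖
        = ∫ θ in (0:ℝ)..(2*Real.pi), ‖H (circleMap 0 s θ)‖ := by
      rw [← MeasureTheory.integral_Ioc_eq_integral_Ioo,
        ← intervalIntegral.integral_of_le (by linarith [Real.pi_pos] : -Real.pi ≤ Real.pi)]
      have := hper.intervalIntegral_add_eq (-Real.pi) 0
      simp only [zero_add] at this
      rw [show -Real.pi + 2*Real.pi = Real.pi by ring] at this
      exact this
    rw [hA, hIoo]
    have hcs := circle_submean H hH 0 hs0
    have hnn : 0 ≤ s * Real.exp (-Real.pi * s ^ 2 / 2) := by positivity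
    exact mul_le_mul_of_nonneg_left hcs hnn
  -- integrate the bound
  have hiInt : IntegrableOn (fun s => ∫ θ in Ioo (-Real.pi) Real.pi, φ (s, θ)) (Ioc (0:ℝ) r) := by
    have hint2 : Integrable φ ((volume.restrict (Ioc (0:ℝ) r)).prod
        (volume.restrict (Ioo (-Real.pi) Real.pi))) := by
      rw [Measure.prod_restrict]
      rw [hS, Measure.volume_eq_prod] at hint
      exact hint
    exact hint2.integral_prod_left
  have hgInt : IntegrableOn
      (fun s => (s * Real.exp (-Real.pi * s ^ 2 / 2)) * (2 * Real.pi * ‖H 0‖))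
      (Ioc (0:ℝ) r) := by
    apply IntegrableOn.mono_set (t := Icc (0:ℝ) r) _ Ioc_subset_Icc_self
    exact (Continuous.continuousOn (by fun_prop)).integrableOn_compact isCompact_Icc
  have h6 : ∫ s in Ioc (0:ℝ) r, (s * Real.exp (-Real.pi * s ^ 2 / 2)) * (2 * Real.pi * ‖H 0‖)
      ≤ ∫ s in Ioc (0:ℝ) r, ∫ θ in Ioo (-Real.pi) Real.pi, φ (s, θ) :=
    setIntegral_mono_on hgInt hiInt measurableSet_Ioc key
  have h7 : ∫ s in Ioc (0:ℝ) r, (s * Real.exp (-Real.pi * s ^ 2 / 2)) * (2 * Real.pi * ‖H 0‖)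
      = 2 * (1 - Real.exp (-Real.pi * r ^ 2 / 2)) * ‖H 0‖ := by
    rw [integral_mul_const, ← intervalIntegral.integral_of_le hr.le, radial_integral r]
    field_simp
  rw [h1, h2, h3, h4, h5, ← h7]
  exact h6

lemma fock_pointwise_bound (F : ℂ → ℂ) (hF : Differentiable ℂ F) {r : ℝ} (hr : 0 < r) (w : ℂ) :
    2 * (1 - Real.exp (-Real.pi * r ^ 2 / 2))
        * (‖F w‖ * Real.exp (-Real.pi * ‖w‖ ^ 2 / 2))
      ≤ ∫ z in closedBall w r,
          ‖F z‖ * Real.exp (-Real.pi * ‖z‖ ^ 2 / 2) := by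
  set u : ℂ → ℝ := fun z => ‖F z‖ * Real.exp (-Real.pi * ‖z‖ ^ 2 / 2) with hu
  set H : ℂ → ℂ := fun z => F (z + w) *
    Complex.exp (-(Real.pi : ℂ) * (z * (starRingEnd ℂ) w)
      - (Real.pi : ℂ) * ((‖w‖ : ℂ)) ^ 2 / 2) with hH'
  have hHd : Differentiable ℂ H := by
    apply Differentiable.mul
    · exact hF.comp (differentiable_id.add_const w)
    · apply Complex.differentiable_exp.comp
      fun_prop
  have habs : ∀ z : ℂ, ‖H z‖ * Real.exp (-Real.pi * ‖z‖ ^ 2 / 2)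
      = u (z + w) := by
    intro z
    rw [hH', hu]
    simp only [norm_mul, Complex.norm_exp]
    rw [mul_assoc, ← Real.exp_add]
    congr 2
    have hre : (-(Real.pi : ℂ) * (z * (starRingEnd ℂ) w)
        - (Real.pi : ℂ) * ((‖w‖ : ℂ)) ^ 2 / 2).re
        = -Real.pi * (z * (starRingEnd ℂ) w).re - Real.pi * (‖w‖) ^ 2 / 2 := by
      simp [Complex.sub_re, Complex.mul_re, Complex.div_re, Complex.ofReal_re, pow_two]
    rw [hre]
    have hsq : ‖z + w‖ ^ 2
        = ‖z‖ ^ 2 + 2 * (z * (starRingEnd ℂ) w).re + ‖w‖ ^ 2 := by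
      rw [← Complex.normSq_eq_norm_sq, ← Complex.normSq_eq_norm_sq, ← Complex.normSq_eq_norm_sq,
        Complex.normSq_add]
      ring
    rw [hsq]
    ring
  have hH0 : ‖H 0‖ = u w := by
    have := habs 0
    simpa using this
  have hstep := disc_weighted_submean H hHd hr
  have htrans : ∫ z in closedBall (0:ℂ) r, u (z + w) = ∫ z in closedBall w r, u z := by
    rw [← integral_indicator (measurableSet_closedBall), ← integral_indicator (measurableSet_closedBall)]
    rw [← integral_add_right_eq_self (fun z => (closedBall w r).indicator u z) w]
    congr 1 with z
    by_cases hz : z ∈ closedBall (0:ℂ) r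
    · have hz' : z + w ∈ closedBall w r := by
        simpa [mem_closedBall, dist_eq_norm] using hz
      rw [indicator_of_mem hz, indicator_of_mem hz']
    · have hz' : z + w ∉ closedBall w r := by
        simpa [mem_closedBall, dist_eq_norm] using hz
      rw [indicator_of_notMem hz, indicator_of_notMem hz']
  calc 2 * (1 - Real.exp (-Real.pi * r ^ 2 / 2)) * u w
      = 2 * (1 - Real.exp (-Real.pi * r ^ 2 / 2)) * ‖H 0‖ := by rw [hH0]
    _ ≤ ∫ z in closedBall (0:ℂ) r, ‖H z‖ * Real.exp (-Real.pi * ‖z‖ ^ 2 / 2) := hstep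
    _ = ∫ z in closedBall (0:ℂ) r, u (z + w) := by
        apply setIntegral_congr_fun measurableSet_closedBall
        intro z _
        exact habs z
    _ = ∫ z in closedBall w r, u z := htrans

/-- If `ρ(Δ,R) < (1 - e^{-π/R²})/2` for some `R > 0`, then every nonzero `F ∈ 𝓕₁(ℂ)` has
strictly less mass on `Δ` than on its complement. -/
theorem sparse_set_minority_mass (Δ : Set ℂ) (hΔ : MeasurableSet Δ) (R : ℝ) (hR : 0 < R)
    (hρ : planarRho Δ R < ENNReal.ofReal ((1 - Real.exp (-Real.pi / R ^ 2)) / 2))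
    (F : ℂ → ℂ) (hF : Differentiable ℂ F)
    (hF1 : Integrable (fun z : ℂ => ‖F z‖ * Real.exp (-Real.pi * ‖z‖ ^ 2 / 2)))
    (hF0 : F ≠ 0) :
    ∫ z in Δ, ‖F z‖ * Real.exp (-Real.pi * ‖z‖ ^ 2 / 2)
      < ∫ z in Δᶜ, ‖F z‖ * Real.exp (-Real.pi * ‖z‖ ^ 2 / 2) := by
  set u : ℂ → ℝ := fun z => ‖F z‖ * Real.exp (-Real.pi * ‖z‖ ^ 2 / 2) with hu
  have hucont : Continuous u := by
    apply Continuous.mul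
    · exact continuous_norm.comp hF.continuous
    · exact Real.continuous_exp.comp
        ((continuous_const.mul (continuous_norm.pow 2)).div_const 2)
  have hunn : ∀ z, 0 ≤ u z := fun z => by positivity
  set U : ℂ → ENNReal := fun z => ENNReal.ofReal (u z) with hU
  have hUm : Measurable U := hucont.measurable.ennreal_ofReal
  set r : ℝ := 1 / R with hrdef
  have hr : 0 < r := by positivity
  set c0 : ℝ := 2 * (1 - Real.exp (-Real.pi * r ^ 2 / 2)) with hc0def
  have hc0 : 0 < c0 := by
    have h1 : Real.exp (-Real.pi * r ^ 2 / 2) < 1 := by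
      apply Real.exp_lt_one_iff.mpr
      have : 0 < Real.pi * r ^ 2 / 2 := by positivity
      linarith
    rw [hc0def]; linarith
  -- Step A
  have hA : ∀ w : ℂ, ENNReal.ofReal c0 * U w ≤ ∫⁻ z in closedBall w r, U z := by
    intro w
    have h1 := fock_pointwise_bound F hF hr w
    have h2 : IntegrableOn u (closedBall w r) := hF1.integrableOn
    have h3 : ENNReal.ofReal (∫ z in closedBall w r, u z) = ∫⁻ z in closedBall w r, U z :=
      ofReal_integral_eq_lintegral_ofReal h2 (Filter.Eventually.of_forall fun z => hunn z)
    calc ENNReal.ofReal c0 * U w = ENNReal.ofReal (c0 * u w) := (ENNReal.ofReal_mul hc0.le).symm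
      _ ≤ ENNReal.ofReal (∫ z in closedBall w r, u z) := ENNReal.ofReal_le_ofReal h1
      _ = ∫⁻ z in closedBall w r, U z := h3
  -- Step B : Tonelli
  set K : ℂ × ℂ → ENNReal := fun p => ({q : ℂ × ℂ | dist q.2 q.1 ≤ r}).indicator (fun q => U q.2) p
    with hK
  have hKm : Measurable K := by
    apply Measurable.indicator (hUm.comp measurable_snd)
    exact (isClosed_le (by fun_prop) continuous_const).measurableSet
  have hswap : ∫⁻ w in Δ, ∫⁻ z, K (w, z) = ∫⁻ z, ∫⁻ w in Δ, K (w, z) :=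
    lintegral_lintegral_swap hKm.aemeasurable
  have hinner1 : ∀ w : ℂ, (∫⁻ z, K (w, z)) = ∫⁻ z in closedBall w r, U z := by
    intro w
    rw [← lintegral_indicator measurableSet_closedBall]
    apply lintegral_congr
    intro z
    by_cases h : dist z w ≤ r <;>
      simp [hK, Set.indicator_apply, mem_setOf_eq, mem_closedBall, h]
  have hinner2 : ∀ z : ℂ, (∫⁻ w in Δ, K (w, z)) = U z * volume (Δ ∩ closedBall z r) := by
    intro z
    have heq : ∀ w : ℂ, K (w, z) = (closedBall z r).indicator (fun _ => U z) w := by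
      intro w
      by_cases h : dist w z ≤ r <;>
        simp [hK, Set.indicator_apply, mem_setOf_eq, mem_closedBall, dist_comm z w, h]
    calc ∫⁻ w in Δ, K (w, z) = ∫⁻ w in Δ, (closedBall z r).indicator (fun _ => U z) w :=
          lintegral_congr heq
      _ = ∫⁻ w in closedBall z r, U z ∂(volume.restrict Δ) :=
          lintegral_indicator measurableSet_closedBall _
      _ = U z * (volume.restrict Δ) (closedBall z r) := setLIntegral_const _ _
      _ = U z * volume (Δ ∩ closedBall z r) := by
          rw [Measure.restrict_apply measurableSet_closedBall, inter_comm]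
  have hball : ∀ z : ℂ, volume (Δ ∩ closedBall z r) ≤ planarRho Δ R := fun z =>
    le_iSup (fun w => volume (Δ ∩ closedBall w (1 / R))) z
  have hmain : ENNReal.ofReal c0 * ∫⁻ z in Δ, U z ≤ planarRho Δ R * ∫⁻ z, U z := by
    calc ENNReal.ofReal c0 * ∫⁻ z in Δ, U z = ∫⁻ w in Δ, ENNReal.ofReal c0 * U w :=
          (lintegral_const_mul _ hUm).symm
      _ ≤ ∫⁻ w in Δ, ∫⁻ z in closedBall w r, U z := lintegral_mono fun w => hA w
      _ = ∫⁻ w in Δ, ∫⁻ z, K (w, z) := lintegral_congr fun w => (hinner1 w).symm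
      _ = ∫⁻ z, ∫⁻ w in Δ, K (w, z) := hswap
      _ = ∫⁻ z, U z * volume (Δ ∩ closedBall z r) := lintegral_congr hinner2
      _ ≤ ∫⁻ z, U z * planarRho Δ R := lintegral_mono fun z => mul_le_mul_right (hball z) _
      _ = (∫⁻ z, U z) * planarRho Δ R := lintegral_mul_const _ hUm
      _ = planarRho Δ R * ∫⁻ z, U z := mul_comm _ _
  set T : ENNReal := ∫⁻ z, U z with hT
  set D : ENNReal := ∫⁻ z in Δ, U z with hD
  set E : ENNReal := ∫⁻ z in Δᶜ, U z with hE
  have hTtop : T ≠ ⊤ := by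
    have h1 : T ≤ ∫⁻ z, ‖u z‖₊ := lintegral_ofReal_le_lintegral_enorm u
    exact (lt_of_le_of_lt h1 hF1.2).ne
  have hT0 : T ≠ 0 := by
    intro h0
    have hae : U =ᵐ[volume] 0 := (lintegral_eq_zero_iff hUm).mp h0
    have hae2 : u =ᵐ[volume] 0 := by
      filter_upwards [hae] with z hz
      have : u z ≤ 0 := ENNReal.ofReal_eq_zero.mp hz
      exact le_antisymm this (hunn z)
    have hzero : u = 0 := (hucont.ae_eq_iff_eq volume continuous_const).mp hae2
    apply hF0
    funext z
    have := congrFun hzero z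
    simp only [hu, Pi.zero_apply] at this
    have hexp : 0 < Real.exp (-Real.pi * ‖z‖ ^ 2 / 2) := Real.exp_pos _
    have habs : ‖F z‖ = 0 := by
      by_contra hc
      have : 0 < ‖F z‖ := lt_of_le_of_ne (norm_nonneg _) (Ne.symm hc)
      nlinarith
    simpa using habs
  have hDT : D ≤ T := lintegral_mono' Measure.restrict_le_self le_rfl
  have hDtop : D ≠ ⊤ := (lt_of_le_of_lt hDT (lt_top_iff_ne_top.mpr hTtop)).ne
  -- strict inequality chain
  have hstrict : planarRho Δ R * T < ENNReal.ofReal ((1 - Real.exp (-Real.pi / R ^ 2)) / 2) * T :=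
    (ENNReal.mul_lt_mul_iff_left hT0 hTtop).mpr hρ
  have hreal : 2 * ((1 - Real.exp (-Real.pi / R ^ 2)) / 2) ≤ c0 := by
    rw [hc0def]
    have hx : -Real.pi / R ^ 2 = 2 * (-Real.pi * r ^ 2 / 2) := by
      rw [hrdef]; field_simp
    rw [hx]
    have hsq : Real.exp (2 * (-Real.pi * r ^ 2 / 2)) = Real.exp (-Real.pi * r ^ 2 / 2) ^ 2 := by
      rw [← Real.exp_nat_mul]; norm_num
    rw [hsq]
    nlinarith [Real.exp_pos (-Real.pi * r ^ 2 / 2), Real.exp_le_one_iff.mpr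
      (by nlinarith [Real.pi_pos, sq_nonneg r] : -Real.pi * r ^ 2 / 2 ≤ 0)]
  have h2q : (2 : ENNReal) * ENNReal.ofReal ((1 - Real.exp (-Real.pi / R ^ 2)) / 2)
      ≤ ENNReal.ofReal c0 := by
    rw [show (2 : ENNReal) = ENNReal.ofReal 2 by simp, ← ENNReal.ofReal_mul (by norm_num)]
    exact ENNReal.ofReal_le_ofReal hreal
  have hfinal : ENNReal.ofReal c0 * (2 * D) < ENNReal.ofReal c0 * T := by
    calc ENNReal.ofReal c0 * (2 * D) = 2 * (ENNReal.ofReal c0 * D) := by ring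
      _ ≤ 2 * (planarRho Δ R * T) := mul_le_mul_right hmain _
      _ < 2 * (ENNReal.ofReal ((1 - Real.exp (-Real.pi / R ^ 2)) / 2) * T) := by
          exact (ENNReal.mul_lt_mul_iff_right (by norm_num) (by norm_num)).mpr hstrict
      _ = (2 * ENNReal.ofReal ((1 - Real.exp (-Real.pi / R ^ 2)) / 2)) * T := by ring
      _ ≤ ENNReal.ofReal c0 * T := mul_le_mul_left h2q _
  have hc0ne : ENNReal.ofReal c0 ≠ 0 := (ENNReal.ofReal_pos.mpr hc0).ne'
  have h2D : 2 * D < T := (ENNReal.mul_lt_mul_iff_right hc0ne ENNReal.ofReal_ne_top).mp hfinal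
  have hsum : D + E = T := lintegral_add_compl U hΔ
  have hDE : D < E := by
    rw [← hsum, two_mul] at h2D
    exact (ENNReal.add_lt_add_iff_left hDtop).mp h2D
  -- back to real integrals
  have hDr : ENNReal.ofReal (∫ z in Δ, u z) = D :=
    ofReal_integral_eq_lintegral_ofReal hF1.integrableOn (Filter.Eventually.of_forall hunn)
  have hEr : ENNReal.ofReal (∫ z in Δᶜ, u z) = E :=
    ofReal_integral_eq_lintegral_ofReal hF1.integrableOn (Filter.Eventually.of_forall hunn)
  have := hDE
  rw [← hDr, ← hEr] at this
  exact (ENNReal.ofReal_lt_ofReal_iff_of_nonneg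
    (integral_nonneg hunn)).mp this
end

section
/- Suppose Δ ⊆ ℂ is measurable with δ(Δ) := sup_{0 ≠ F ∈ 𝓕₁(ℂ)} (∫_Δ |F| e^{-π|z|²/2} dA) / ‖F‖_{𝓛₁} < 1/2. Let f ∈ 𝓕₁(ℂ) and let N ∈ L¹(ℂ, e^{-π|z|²/2} dA) be supported on Δ, and set G = f + N. Then f is the unique minimizer over g ∈ 𝓕₁(ℂ) of ‖G - g‖_{𝓛₁} = ∫_ℂ |G(z) - g(z)| e^{-π|z|²/2} dA(z). -/
open MeasureTheory

/-- Gaussian-weighted L¹ (Fock) norm. -/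
noncomputable def fockNorm (F : ℂ → ℂ) : ℝ :=
  ∫ z : ℂ, ‖F z‖ * Real.exp (-Real.pi * ‖z‖ ^ 2 / 2)

/-- Membership in the Fock space `𝓕₁(ℂ)`: entire with finite weighted L¹ norm. -/
def MemFock1 (F : ℂ → ℂ) : Prop :=
  Differentiable ℂ F ∧
    Integrable (fun z : ℂ => ‖F z‖ * Real.exp (-Real.pi * ‖z‖ ^ 2 / 2))

/-- `δ(Δ) = sup_{0 ≠ F ∈ 𝓕₁} (∫_Δ |F| e^{-π|z|²/2} dA)/‖F‖_{𝓛₁}`. -/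
noncomputable def fockDelta (Δ : Set ℂ) : ℝ :=
  ⨆ F : {F : ℂ → ℂ // MemFock1 F ∧ F ≠ 0},
    (∫ z in Δ, ‖F.1 z‖ * Real.exp (-Real.pi * ‖z‖ ^ 2 / 2)) / fockNorm F.1

/-- Perfect recovery from sparse noise (Corollary 1, Fock model): if `δ(Δ) < 1/2`,
`f ∈ 𝓕₁(ℂ)`, `N` is weighted-L¹ and supported on `Δ`, and `G = f + N` is observed,
then `f` is the unique minimizer of `g ↦ ‖G - g‖_{𝓛₁}` over `𝓕₁(ℂ)`. -/
theorem perfect_recovery_sparse_noise (Δ : Set ℂ) (hΔ : MeasurableSet Δ)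
    (hδ : fockDelta Δ < 1 / 2)
    (f : ℂ → ℂ) (hf : MemFock1 f)
    (N : ℂ → ℂ) (hNmeas : Measurable N)
    (hN1 : Integrable (fun z : ℂ => ‖N z‖ * Real.exp (-Real.pi * ‖z‖ ^ 2 / 2)))
    (hNsupp : ∀ᵐ z : ℂ, z ∉ Δ → N z = 0)
    (G : ℂ → ℂ) (hG : G = fun z => f z + N z) :
    ∀ g : ℂ → ℂ, MemFock1 g → g ≠ f →
      fockNorm (fun z => G z - f z) < fockNorm (fun z => G z - g z) := by
  intro g hg hgf
  subst hG
  set w : ℂ → ℝ := fun z => Real.exp (-Real.pi * ‖z‖ ^ 2 / 2) with hwdef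
  have hwcont : Continuous w := by
    apply Real.continuous_exp.comp
    continuity
  have hwpos : ∀ z, 0 < w z := fun z => Real.exp_pos _
  set h : ℂ → ℂ := fun z => f z - g z with hhdef
  have hhdiff : Differentiable ℂ h := hf.1.sub hg.1
  have hhcont : Continuous fun z => ‖h z‖ * w z :=
    (continuous_norm.comp hhdiff.continuous).mul hwcont
  have hhne : h ≠ 0 := by
    intro hc
    apply hgf
    funext z
    have h0 : f z - g z = 0 := congrFun hc z
    exact (sub_eq_zero.mp h0).symm
  have hhint : Integrable (fun z => ‖h z‖ * w z) := by
    apply Integrable.mono' (hf.2.add hg.2) hhcont.aestronglyMeasurable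
    filter_upwards with z
    have : ‖h z‖ ≤ ‖f z‖ + ‖g z‖ := by
      simpa [hhdef, sub_eq_add_neg] using norm_add_le (f z) (-g z)
    have hw0 : 0 ≤ w z := (hwpos z).le
    calc ‖‖h z‖ * w z‖ = ‖h z‖ * w z := by
          rw [Real.norm_eq_abs, abs_of_nonneg (mul_nonneg (norm_nonneg _) hw0)]
      _ ≤ (‖f z‖ + ‖g z‖) * w z := by
          exact mul_le_mul_of_nonneg_right this hw0
      _ = ‖f z‖ * w z + ‖g z‖ * w z := by ring
  -- positivity of fockNorm h
  have hnormpos : 0 < fockNorm h := by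
    rw [fockNorm]
    rw [integral_pos_iff_support_of_nonneg
      (fun z => mul_nonneg (norm_nonneg _) (hwpos z).le) hhint]
    obtain ⟨z0, hz0⟩ : ∃ z, h z ≠ 0 := by
      by_contra hc; push_neg at hc; exact hhne (funext hc)
    have hopen : IsOpen {z : ℂ | h z ≠ 0} :=
      isOpen_ne.preimage hhdiff.continuous
    have hsub : {z : ℂ | h z ≠ 0} ⊆ Function.support fun z => ‖h z‖ * w z := by
      intro z hz
      simp only [Function.mem_support]
      exact mul_ne_zero (by simpa using hz) (hwpos z).ne'
    calc (0 : ENNReal) < volume {z : ℂ | h z ≠ 0} :=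
          hopen.measure_pos volume ⟨z0, hz0⟩
      _ ≤ volume (Function.support fun z => ‖h z‖ * w z) :=
          measure_mono hsub
  -- bound on ∫_Δ |h| w
  have hbdd : BddAbove (Set.range fun F : {F : ℂ → ℂ // MemFock1 F ∧ F ≠ 0} =>
      (∫ z in Δ, ‖F.1 z‖ * Real.exp (-Real.pi * ‖z‖ ^ 2 / 2)) / fockNorm F.1) := by
    refine ⟨1, ?_⟩
    rintro x ⟨F, rfl⟩
    have hFint := F.2.1.2
    have hle : (∫ z in Δ, ‖F.1 z‖ * Real.exp (-Real.pi * ‖z‖ ^ 2 / 2)) ≤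
        fockNorm F.1 := by
      rw [fockNorm]
      apply setIntegral_le_integral hFint
      filter_upwards with z
      exact mul_nonneg (norm_nonneg _) (Real.exp_pos _).le
    have hnn : (0:ℝ) ≤ fockNorm F.1 :=
      integral_nonneg fun z => mul_nonneg (norm_nonneg _) (Real.exp_pos _).le
    exact div_le_one_of_le₀ hle hnn
  have hratio : (∫ z in Δ, ‖h z‖ * w z) / fockNorm h ≤ fockDelta Δ := by
    have := le_ciSup hbdd (⟨h, ⟨hhdiff, hhint⟩, hhne⟩ :
      {F : ℂ → ℂ // MemFock1 F ∧ F ≠ 0})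
    simpa [fockDelta, hwdef] using this
  have hΔh : (∫ z in Δ, ‖h z‖ * w z) < fockNorm h / 2 := by
    have h1 : (∫ z in Δ, ‖h z‖ * w z) / fockNorm h < 1/2 :=
      lt_of_le_of_lt hratio hδ
    have := (div_lt_iff₀ hnormpos).mp h1
    linarith
  -- the perturbed function
  set q : ℂ → ℝ := fun z => ‖N z + h z‖ * w z with hqdef
  have hqmeas : AEStronglyMeasurable q volume := by
    apply Measurable.aestronglyMeasurable
    exact ((continuous_norm.measurable.comp
      (hNmeas.add hhdiff.continuous.measurable)).mul hwcont.measurable)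
  have hNw : Integrable (fun z => ‖N z‖ * w z) := hN1
  have hqint : Integrable q := by
    apply Integrable.mono' (hNw.add hhint) hqmeas
    filter_upwards with z
    have hw0 : 0 ≤ w z := (hwpos z).le
    have : ‖N z + h z‖ ≤ ‖N z‖ + ‖h z‖ :=
      norm_add_le _ _
    calc ‖q z‖ = ‖N z + h z‖ * w z := by
          rw [Real.norm_eq_abs, abs_of_nonneg (mul_nonneg (norm_nonneg _) hw0)]
      _ ≤ (‖N z‖ + ‖h z‖) * w z :=
          mul_le_mul_of_nonneg_right this hw0
      _ = ‖N z‖ * w z + ‖h z‖ * w z := by ring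
  -- rewrite the two fockNorms
  have hLHS : fockNorm (fun z => (f z + N z) - f z) = ∫ z, ‖N z‖ * w z := by
    simp [fockNorm, hwdef]
  have hRHS : fockNorm (fun z => (f z + N z) - g z) = ∫ z, q z := by
    unfold fockNorm
    apply integral_congr_ae
    filter_upwards with z
    have hz : f z + N z - g z = N z + h z := by simp only [hhdef]; ring
    simp only [hqdef, hwdef]
    rw [hz]
  rw [hLHS, hRHS]
  -- split integrals
  have hsplitq : ∫ z, q z = (∫ z in Δ, q z) + ∫ z in Δᶜ, q z :=
    (integral_add_compl hΔ hqint).symm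
  have hsplith : fockNorm h = (∫ z in Δ, ‖h z‖ * w z)
      + ∫ z in Δᶜ, ‖h z‖ * w z := by
    rw [fockNorm]
    exact (integral_add_compl hΔ hhint).symm
  have hsplitN : ∫ z, ‖N z‖ * w z = ∫ z in Δ, ‖N z‖ * w z := by
    rw [← integral_add_compl hΔ hNw]
    have : ∫ z in Δᶜ, ‖N z‖ * w z = 0 := by
      apply integral_eq_zero_of_ae
      rw [Filter.EventuallyEq, ae_restrict_iff' hΔ.compl]
      filter_upwards [hNsupp] with z hz hzc
      simp [hz hzc]
    rw [this, add_zero]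
  -- on Δᶜ, q = |h| w
  have hqcompl : ∫ z in Δᶜ, q z = ∫ z in Δᶜ, ‖h z‖ * w z := by
    apply integral_congr_ae
    rw [Filter.EventuallyEq, ae_restrict_iff' hΔ.compl]
    filter_upwards [hNsupp] with z hz hzc
    simp [hqdef, hz hzc]
  -- on Δ, reverse triangle
  have hqΔ : (∫ z in Δ, ‖N z‖ * w z) - (∫ z in Δ, ‖h z‖ * w z)
      ≤ ∫ z in Δ, q z := by
    have : (∫ z in Δ, ‖N z‖ * w z) ≤
        (∫ z in Δ, q z) + ∫ z in Δ, ‖h z‖ * w z := by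
      rw [← integral_add (hqint.restrict) (hhint.restrict)]
      apply integral_mono_ae (hNw.restrict) (hqint.restrict.add hhint.restrict)
      filter_upwards with z
      have hw0 : 0 ≤ w z := (hwpos z).le
      have : ‖N z‖ ≤ ‖N z + h z‖ + ‖h z‖ := by
        simpa using norm_add_le (N z + h z) (-h z)
      calc ‖N z‖ * w z
          ≤ (‖N z + h z‖ + ‖h z‖) * w z :=
            mul_le_mul_of_nonneg_right this hw0
        _ = q z + ‖h z‖ * w z := by simp [hqdef]; ring
    linarith
  rw [hsplitN, hsplitq, hqcompl]
  have hcompl : ∫ z in Δᶜ, ‖h z‖ * w z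
      = fockNorm h - ∫ z in Δ, ‖h z‖ * w z := by linarith [hsplith]
  rw [hcompl]
  linarith
end

section
/- Let Δ ⊆ ℂ be measurable with δ(Δ) := sup_{0≠F∈𝓕₁} (∫_Δ |F|e^{-π|z|²/2}dA)/‖F‖_{𝓛₁} < 1, let f ∈ 𝓕₁(ℂ), let N have weighted L¹ norm ‖N‖ ≤ ε, and set H = χ_{Δᶜ}(f + N). If σ ∈ 𝓕₁(ℂ) satisfies ‖χ_{Δᶜ}(H - σ)‖_{𝓛₁} ≤ ‖χ_{Δᶜ}(H - g)‖_{𝓛₁} for all g ∈ 𝓕₁(ℂ), then ‖f - σ‖_{𝓛₁} ≤ 2ε/(1 - δ(Δ)). -/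
open MeasureTheory

/-- The Gaussian weight. -/
noncomputable def fockW (z : ℂ) : ℝ := Real.exp (-Real.pi * ‖z‖ ^ 2 / 2)

lemma fockW_pos (z : ℂ) : 0 < fockW z := Real.exp_pos _

lemma fockW_continuous : Continuous fockW := by
  unfold fockW
  exact Real.continuous_exp.comp
    ((continuous_const.mul (continuous_norm.pow 2)).div_const 2)

lemma fockNorm_eq (F : ℂ → ℂ) : fockNorm F = ∫ z : ℂ, ‖F z‖ * fockW z := rfl

lemma fockNorm_nonneg (F : ℂ → ℂ) : 0 ≤ fockNorm F :=
  integral_nonneg fun z => mul_nonneg (norm_nonneg _) (fockW_pos z).le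

lemma fockNorm_indicator (s : Set ℂ) (hs : MeasurableSet s) (F : ℂ → ℂ) :
    fockNorm (s.indicator F) = ∫ z in s, ‖F z‖ * fockW z := by
  rw [fockNorm_eq, ← integral_indicator hs]
  congr 1; funext z
  by_cases hz : z ∈ s <;> simp [Set.indicator_of_mem, Set.indicator_of_notMem, hz]

/-- Each ratio in the sup defining `fockDelta` is at most `1`. -/
lemma fock_ratio_le_one (Δ : Set ℂ) (F : {F : ℂ → ℂ // MemFock1 F ∧ F ≠ 0}) :
    (∫ z in Δ, ‖F.1 z‖ * Real.exp (-Real.pi * ‖z‖ ^ 2 / 2)) / fockNorm F.1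
      ≤ 1 := by
  apply div_le_one_of_le₀
  · exact setIntegral_le_integral F.2.1.2
      (Filter.Eventually.of_forall fun z => mul_nonneg (norm_nonneg _) (Real.exp_pos _).le)
  · exact fockNorm_nonneg _

/-- Missing-data recovery (Corollary 2, Fock model): if `δ(Δ) < 1`, `f ∈ 𝓕₁(ℂ)`,
`‖N‖ ≤ ε`, and `H = χ_{Δᶜ}(f + N)` is observed, then any minimizer `σ` of
`g ↦ ‖χ_{Δᶜ}(H - g)‖_{𝓛₁}` over `𝓕₁(ℂ)` satisfies `‖f - σ‖ ≤ 2ε/(1 - δ(Δ))`. -/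
theorem missing_data_recovery (Δ : Set ℂ) (hΔ : MeasurableSet Δ)
    (hδ : fockDelta Δ < 1)
    (f : ℂ → ℂ) (hf : MemFock1 f)
    (N : ℂ → ℂ) (hNmeas : Measurable N) (ε : ℝ)
    (hN1 : Integrable (fun z : ℂ => ‖N z‖ * Real.exp (-Real.pi * ‖z‖ ^ 2 / 2)))
    (hNε : fockNorm N ≤ ε)
    (H : ℂ → ℂ) (hH : H = Δᶜ.indicator (fun z => f z + N z))
    (σ : ℂ → ℂ) (hσ : MemFock1 σ)
    (hmin : ∀ g : ℂ → ℂ, MemFock1 g →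
      fockNorm (Δᶜ.indicator (fun z => H z - σ z)) ≤ fockNorm (Δᶜ.indicator (fun z => H z - g z))) :
    fockNorm (fun z => f z - σ z) ≤ 2 * ε / (1 - fockDelta Δ) := by
  have hδpos : 0 < 1 - fockDelta Δ := by linarith
  have hε0 : 0 ≤ ε := le_trans (fockNorm_nonneg N) hNε
  set G : ℂ → ℂ := fun z => f z - σ z with hGdef
  have hGcont : Continuous G := hf.1.continuous.sub hσ.1.continuous
  have hN1' : Integrable (fun z : ℂ => ‖N z‖ * fockW z) := hN1
  have hGint : Integrable (fun z : ℂ => ‖G z‖ * fockW z) := by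
    refine (hf.2.add hσ.2).mono' ?_ ?_
    · exact ((continuous_norm.comp hGcont).mul fockW_continuous).aestronglyMeasurable
    · filter_upwards with z
      have habs : ‖G z‖ ≤ ‖f z‖ + ‖σ z‖ := by
        simpa using norm_sub_le (f z) (σ z)
      rw [Real.norm_of_nonneg (mul_nonneg (norm_nonneg _) (fockW_pos z).le)]
      show ‖G z‖ * fockW z ≤
        ‖f z‖ * fockW z + ‖σ z‖ * fockW z
      rw [← add_mul]
      exact mul_le_mul_of_nonneg_right habs (fockW_pos z).le
  by_cases h0 : fockNorm G = 0
  · rw [h0]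
    exact div_nonneg (by linarith) hδpos.le
  · have hGpos : 0 < fockNorm G := lt_of_le_of_ne (fockNorm_nonneg G) (Ne.symm h0)
    have hGne : G ≠ 0 := by
      intro h
      apply h0
      rw [fockNorm_eq, h]
      simp
    -- the Δ part is at most δ · ‖G‖
    have hbdd : BddAbove (Set.range fun F : {F : ℂ → ℂ // MemFock1 F ∧ F ≠ 0} =>
        (∫ z in Δ, ‖F.1 z‖ * Real.exp (-Real.pi * ‖z‖ ^ 2 / 2)) /
          fockNorm F.1) := by
      refine ⟨1, ?_⟩
      rintro x ⟨F, rfl⟩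
      exact fock_ratio_le_one Δ F
    have hratio : (∫ z in Δ, ‖G z‖ * fockW z) / fockNorm G ≤ fockDelta Δ := by
      have := le_ciSup hbdd (⟨G, ⟨⟨hf.1.sub hσ.1, hGint⟩, hGne⟩⟩ :
        {F : ℂ → ℂ // MemFock1 F ∧ F ≠ 0})
      exact this
    have hΔpart : ∫ z in Δ, ‖G z‖ * fockW z ≤ fockDelta Δ * fockNorm G :=
      (div_le_iff₀ hGpos).mp hratio
    -- splitting
    have hsplit : (∫ z in Δ, ‖G z‖ * fockW z) +
        (∫ z in Δᶜ, ‖G z‖ * fockW z) = fockNorm G :=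
      integral_add_compl hΔ hGint
    -- the minimizer bound : ‖χ(H-σ)‖ ≤ ‖χ(H-f)‖ = ‖χ N‖ ≤ ε
    have hHmeas : Measurable H := by
      rw [hH]
      exact ((hf.1.continuous.measurable.add hNmeas)).indicator hΔ.compl
    have hHf : Δᶜ.indicator (fun z => H z - f z) = Δᶜ.indicator N := by
      funext z
      by_cases hz : z ∈ Δᶜ
      · simp only [Set.indicator_of_mem hz, hH]
        ring
      · simp [Set.indicator_of_notMem hz]
    have hminf : fockNorm (Δᶜ.indicator (fun z => H z - σ z)) ≤ ε := by
      calc fockNorm (Δᶜ.indicator (fun z => H z - σ z))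
          ≤ fockNorm (Δᶜ.indicator (fun z => H z - f z)) := hmin f hf
        _ = ∫ z in Δᶜ, ‖N z‖ * fockW z := by
            rw [hHf, fockNorm_indicator _ hΔ.compl]
        _ ≤ fockNorm N := setIntegral_le_integral hN1'
            (Filter.Eventually.of_forall fun z =>
              mul_nonneg (norm_nonneg _) (fockW_pos z).le)
        _ ≤ ε := hNε
    have hHσint : IntegrableOn (fun z => ‖H z - σ z‖ * fockW z) Δᶜ := by
      refine ((hGint.add hN1').restrict (s := Δᶜ)).mono' ?_ ?_
      · exact ((continuous_norm.measurable.comp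
          (hHmeas.sub hσ.1.continuous.measurable)).mul
            fockW_continuous.measurable).aestronglyMeasurable
      · rw [ae_restrict_iff' hΔ.compl]
        filter_upwards with z hz
        have hHz : H z = f z + N z := by rw [hH, Set.indicator_of_mem hz]
        have habs : ‖H z - σ z‖ ≤ ‖G z‖ + ‖N z‖ := by
          have : H z - σ z = G z + N z := by rw [hHz, hGdef]; ring
          rw [this]
          simpa using norm_add_le (G z) (N z)
        rw [Real.norm_of_nonneg (mul_nonneg (norm_nonneg _) (fockW_pos z).le)]
        show ‖H z - σ z‖ * fockW z ≤
          ‖G z‖ * fockW z + ‖N z‖ * fockW z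
        rw [← add_mul]
        exact mul_le_mul_of_nonneg_right habs (fockW_pos z).le
    -- the Δᶜ part is at most 2ε
    have hcompl : ∫ z in Δᶜ, ‖G z‖ * fockW z ≤ 2 * ε := by
      have htri : ∫ z in Δᶜ, ‖G z‖ * fockW z ≤
          ∫ z in Δᶜ, (‖H z - σ z‖ * fockW z + ‖N z‖ * fockW z) := by
        refine setIntegral_mono_on hGint.integrableOn (hHσint.add hN1'.integrableOn)
          hΔ.compl fun z hz => ?_
        have hHz : H z = f z + N z := by rw [hH, Set.indicator_of_mem hz]
        have habs : ‖G z‖ ≤ ‖H z - σ z‖ + ‖N z‖ := by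
          have : G z = (H z - σ z) - N z := by rw [hHz, hGdef]; ring
          rw [this]
          simpa using norm_sub_le (H z - σ z) (N z)
        rw [← add_mul]
        exact mul_le_mul_of_nonneg_right habs (fockW_pos z).le
      have hadd : ∫ z in Δᶜ, (‖H z - σ z‖ * fockW z + ‖N z‖ * fockW z) =
          (∫ z in Δᶜ, ‖H z - σ z‖ * fockW z) +
            ∫ z in Δᶜ, ‖N z‖ * fockW z :=
        integral_add hHσint hN1'.integrableOn
      have h1 : (∫ z in Δᶜ, ‖H z - σ z‖ * fockW z) ≤ ε := by
        rw [← fockNorm_indicator _ hΔ.compl]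
        exact hminf
      have h2 : (∫ z in Δᶜ, ‖N z‖ * fockW z) ≤ ε :=
        le_trans (setIntegral_le_integral hN1'
          (Filter.Eventually.of_forall fun z =>
            mul_nonneg (norm_nonneg _) (fockW_pos z).le)) hNε
      linarith [htri, hadd.le, h1, h2]
    rw [le_div_iff₀ hδpos]
    nlinarith [hsplit, hΔpart, hcompl]
end

section
/- The map F ↦ (1 - e^{-π/R²})^{-1} (F ∗ χ_{D_{1/R}}) is the identity on 𝓕₁(ℂ); in particular for every Φ ∈ 𝓕₁(ℂ), ‖Φ ∗ χ_{D_{1/R}}‖_{𝓛₁} = (1 - e^{-π/R²}) ‖Φ‖_{𝓛₁}, so ν(χ_{D_{1/R}}) := sup_{0≠Φ∈𝓕₁} ‖Φ‖_{𝓛₁}/‖Φ ∗ χ_{D_{1/R}}‖_{𝓛₁} = (1 - e^{-π/R²})^{-1}. -/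
open MeasureTheory
open Set Metric intervalIntegral

/-- Twisted Fock-space convolution. -/
noncomputable def tconv (F G : ℂ → ℂ) (z : ℂ) : ℂ :=
  ∫ w : ℂ, F w * G (z - w) *
    Complex.exp ((Real.pi : ℂ) * (z * (starRingEnd ℂ) w - ((‖w‖ : ℂ)) ^ 2))

private lemma polar_symm_circleMap (ρ θ : ℝ) :
    Complex.polarCoord.symm (ρ, θ) = circleMap 0 ρ θ := by
  simp [circleMap, Complex.exp_mul_I, ← Complex.ofReal_cos, ← Complex.ofReal_sin]

private lemma circle_mean_aux (g : ℂ → ℂ) (hg : Differentiable ℂ g) {ρ : ℝ} (hρ : 0 < ρ) :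
    (∫ θ in (0:ℝ)..(2*Real.pi), g (circleMap 0 ρ θ)) = (2*Real.pi : ℝ) • g 0 := by
  have h := (hg.differentiableOn :
      DifferentiableOn ℂ g (closedBall (0:ℂ) ρ)).circleIntegral_sub_inv_smul
      (w := 0) (by simpa using hρ)
  rw [circleIntegral] at h
  have h2 : ∀ θ : ℝ, deriv (circleMap 0 ρ) θ •
      ((circleMap 0 ρ θ - 0)⁻¹ • g (circleMap 0 ρ θ)) = Complex.I • g (circleMap 0 ρ θ) := by
    intro θ
    have hne : circleMap 0 ρ θ ≠ 0 := by
      simpa using circleMap_ne_center (c := (0:ℂ)) hρ.ne' (θ := θ)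
    rw [deriv_circleMap]
    simp only [sub_zero, smul_eq_mul]
    field_simp
  simp_rw [h2, intervalIntegral.integral_smul] at h
  have hI : (Complex.I : ℂ) ≠ 0 := Complex.I_ne_zero
  have h3 : Complex.I • (∫ θ in (0:ℝ)..(2*Real.pi), g (circleMap 0 ρ θ))
      = Complex.I • (((2*Real.pi : ℝ)) • g 0) := by
    rw [h]; simp only [smul_eq_mul, Complex.real_smul]; push_cast; ring
  exact smul_right_injective ℂ hI h3

private lemma ioo_mean (g : ℂ → ℂ) (hg : Differentiable ℂ g) {ρ : ℝ} (hρ : 0 < ρ) :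
    (∫ θ in Ioo (-Real.pi) Real.pi, g (circleMap 0 ρ θ)) = (2*Real.pi : ℝ) • g 0 := by
  rw [← MeasureTheory.integral_Ioc_eq_integral_Ioo,
    ← intervalIntegral.integral_of_le (by linarith [Real.pi_pos] : -Real.pi ≤ Real.pi)]
  have hper : Function.Periodic (fun θ => g (circleMap 0 ρ θ)) (2*Real.pi) :=
    (periodic_circleMap 0 ρ).comp g
  have := hper.intervalIntegral_add_eq (-Real.pi) 0
  have he1 : -Real.pi + 2*Real.pi = Real.pi := by ring
  have he2 : (0:ℝ) + 2*Real.pi = 2*Real.pi := by ring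
  rw [he1, he2] at this
  rw [this]
  exact circle_mean_aux g hg hρ

private lemma disc_gaussian_integral (g : ℂ → ℂ) (hg : Differentiable ℂ g) {r : ℝ} (hr : 0 < r) :
    (∫ u : ℂ, (closedBall (0:ℂ) r).indicator
        (fun u => g u * (Real.exp (-Real.pi * ‖u‖ ^ 2) : ℝ)) u)
      = ((1 - Real.exp (-Real.pi * r ^ 2)) : ℝ) • g 0 := by
  set f : ℂ → ℂ := fun u => (closedBall (0:ℂ) r).indicator
      (fun u => g u * (Real.exp (-Real.pi * ‖u‖ ^ 2) : ℝ)) u with hf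
  rw [← Complex.integral_comp_polarCoord_symm f]
  have hsub : (Ioc (0:ℝ) r ×ˢ Ioo (-Real.pi) Real.pi) ⊆ polarCoord.target := by
    rw [polarCoord_target]
    exact Set.prod_mono Ioc_subset_Ioi_self subset_rfl
  rw [setIntegral_eq_of_subset_of_forall_diff_eq_zero
      polarCoord.open_target.measurableSet hsub ?_]
  · -- now on Ioc 0 r ×ˢ Ioo (-π) π
    have hcong : ∀ p ∈ (Ioc (0:ℝ) r ×ˢ Ioo (-Real.pi) Real.pi),
        p.1 • f (Complex.polarCoord.symm p)
          = (p.1 * Real.exp (-Real.pi * p.1 ^ 2)) • g (circleMap 0 p.1 p.2) := by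
      rintro ⟨ρ, θ⟩ ⟨hρ, hθ⟩
      have habs : ‖circleMap 0 ρ θ‖ = ρ := by
        rw [← polar_symm_circleMap, Complex.norm_polarCoord_symm]; exact abs_of_pos hρ.1
      have hmem : circleMap 0 ρ θ ∈ closedBall (0:ℂ) r := by
        rw [mem_closedBall_zero_iff, habs]; exact hρ.2
      show ρ • f (Complex.polarCoord.symm (ρ, θ)) = _
      rw [polar_symm_circleMap, hf]
      simp only [indicator_of_mem hmem, habs, Complex.real_smul, Complex.ofReal_mul]
      ring
    rw [setIntegral_congr_fun (measurableSet_Ioc.prod measurableSet_Ioo) hcong]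
    rw [Measure.volume_eq_prod, setIntegral_prod]
    · have hinner : ∀ ρ ∈ Ioc (0:ℝ) r,
          (∫ θ in Ioo (-Real.pi) Real.pi,
            (ρ * Real.exp (-Real.pi * ρ ^ 2)) • g (circleMap 0 ρ θ))
          = (ρ * Real.exp (-Real.pi * ρ ^ 2)) • ((2*Real.pi : ℝ) • g 0) := by
        intro ρ hρ
        rw [MeasureTheory.integral_smul, ioo_mean g hg hρ.1]
      rw [setIntegral_congr_fun measurableSet_Ioc hinner]
      rw [_root_.integral_smul_const]
      have hJ : (∫ ρ in Ioc (0:ℝ) r, ρ * Real.exp (-Real.pi * ρ ^ 2))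
          = (1 - Real.exp (-Real.pi * r ^ 2)) / (2*Real.pi) := by
        rw [← intervalIntegral.integral_of_le hr.le]
        have hderiv : ∀ ρ ∈ Set.uIcc (0:ℝ) r,
            HasDerivAt (fun x => -(2*Real.pi)⁻¹ * Real.exp (-Real.pi * x ^ 2))
              (ρ * Real.exp (-Real.pi * ρ ^ 2)) ρ := by
          intro ρ _
          have h1 : HasDerivAt (fun x : ℝ => -Real.pi * x ^ 2) (-Real.pi * (2*ρ)) ρ := by
            simpa [mul_comm] using ((hasDerivAt_pow 2 ρ).const_mul (-Real.pi))
          have h2 := (h1.exp).const_mul (-(2*Real.pi)⁻¹)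
          refine h2.congr_deriv ?_
          field_simp
        rw [intervalIntegral.integral_eq_sub_of_hasDerivAt hderiv ?_]
        · field_simp
          norm_num
          ring
        · apply Continuous.intervalIntegrable
          continuity
      rw [hJ, smul_smul]
      congr 1
      field_simp
    · -- integrability
      have hc2 : Continuous fun p : ℝ × ℝ => circleMap 0 p.1 p.2 := by
        have : (fun p : ℝ × ℝ => circleMap 0 p.1 p.2)
            = fun p => (p.1 : ℂ) * Complex.exp (p.2 * Complex.I) := by
          funext p; simp [circleMap]
        rw [this]
        exact (Complex.continuous_ofReal.comp continuous_fst).mul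
          (Complex.continuous_exp.comp
            ((Complex.continuous_ofReal.comp continuous_snd).mul continuous_const))
      have hc1 : Continuous fun p : ℝ × ℝ => p.1 * Real.exp (-Real.pi * p.1 ^ 2) :=
        continuous_fst.mul (Real.continuous_exp.comp
          (continuous_const.mul (continuous_fst.pow 2)))
      exact (ContinuousOn.integrableOn_compact (isCompact_Icc.prod isCompact_Icc)
        (hc1.smul (hg.continuous.comp hc2)).continuousOn).mono_set
        (Set.prod_mono Ioc_subset_Icc_self Ioo_subset_Icc_self)
  · rintro ⟨ρ, θ⟩ ⟨hmem, hnot⟩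
    rw [polarCoord_target] at hmem
    have hρ : 0 < ρ := hmem.1
    have : ¬ ρ ≤ r := by
      intro hle
      exact hnot ⟨⟨hρ, hle⟩, hmem.2⟩
    have hout : Complex.polarCoord.symm (ρ, θ) ∉ closedBall (0:ℂ) r := by
      rw [mem_closedBall_zero_iff, Complex.norm_polarCoord_symm,
        abs_of_pos hρ]
      exact fun h => this h
    simp only [hf, indicator_of_notMem hout, smul_zero]

private lemma tconv_eq (R : ℝ) (hR : 0 < R) (Φ : ℂ → ℂ) (hΦ : Differentiable ℂ Φ) (z : ℂ) :
    tconv Φ ((closedBall (0 : ℂ) (1 / R)).indicator (fun _ => (1 : ℂ))) z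
      = (1 - Real.exp (-Real.pi / R ^ 2)) • Φ z := by
  have hr : 0 < 1 / R := by positivity
  set g : ℂ → ℂ := fun u => Φ (z + u) *
      Complex.exp (-(Real.pi : ℂ) * (u * (starRingEnd ℂ) z)) with hgdef
  have hg : Differentiable ℂ g :=
    (hΦ.comp (differentiable_const z |>.add differentiable_id)).mul
      (Complex.differentiable_exp.comp
        ((differentiable_id.mul_const _).const_mul _))
  have key : ∀ u : ℂ,
      Φ (z + u) * ((closedBall (0 : ℂ) (1 / R)).indicator (fun _ => (1 : ℂ)) (z - (z + u))) *
        Complex.exp ((Real.pi : ℂ) * (z * (starRingEnd ℂ) (z + u) -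
          ((‖z + u‖ : ℂ)) ^ 2))
      = (closedBall (0:ℂ) (1 / R)).indicator
          (fun u => g u * (Real.exp (-Real.pi * ‖u‖ ^ 2) : ℝ)) u := by
    intro u
    have hzz : z - (z + u) = -u := by ring
    rw [hzz]
    by_cases hu : u ∈ closedBall (0:ℂ) (1 / R)
    · have hmu : -u ∈ closedBall (0:ℂ) (1 / R) := by
        rw [mem_closedBall_zero_iff, norm_neg] at *
        exact hu
      rw [indicator_of_mem hmu, indicator_of_mem hu]
      have habs : ∀ w : ℂ, ((‖w‖ : ℂ))^2 = w * (starRingEnd ℂ) w := by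
        intro w
        rw [← Complex.ofReal_pow, Complex.sq_norm, Complex.mul_conj]
      rw [hgdef]
      simp only [mul_one]
      rw [Complex.ofReal_exp, mul_assoc, ← Complex.exp_add]
      congr 1
      congr 1
      rw [habs]
      push_cast
      rw [habs u, map_add]
      ring
    · have hmu : -u ∉ closedBall (0:ℂ) (1 / R) := by
        rw [mem_closedBall_zero_iff, norm_neg] at *
        exact hu
      rw [indicator_of_notMem hmu, indicator_of_notMem hu]
      ring
  rw [tconv]
  rw [show (∫ w : ℂ, Φ w *
        ((closedBall (0 : ℂ) (1 / R)).indicator (fun _ => (1 : ℂ)) (z - w)) *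
        Complex.exp ((Real.pi : ℂ) * (z * (starRingEnd ℂ) w - ((‖w‖ : ℂ)) ^ 2)))
      = ∫ u : ℂ, Φ (z + u) *
        ((closedBall (0 : ℂ) (1 / R)).indicator (fun _ => (1 : ℂ)) (z - (z + u))) *
        Complex.exp ((Real.pi : ℂ) * (z * (starRingEnd ℂ) (z + u) -
          ((‖z + u‖ : ℂ)) ^ 2))
    from (MeasureTheory.integral_add_left_eq_self _ z).symm]
  simp_rw [key]
  rw [disc_gaussian_integral g hg hr]
  have h1 : -Real.pi * (1 / R) ^ 2 = -Real.pi / R ^ 2 := by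
    field_simp
  have h2 : g 0 = Φ z := by simp [hgdef]
  rw [h1, h2]

private lemma fockNorm_pos (Φ : ℂ → ℂ) (hΦ : MemFock1 Φ) (hne : Φ ≠ 0) : 0 < fockNorm Φ := by
  rw [fockNorm, MeasureTheory.integral_pos_iff_support_of_nonneg
    (fun z => by positivity) hΦ.2]
  have hsupp : Function.support (fun z : ℂ =>
      ‖Φ z‖ * Real.exp (-Real.pi * ‖z‖ ^ 2 / 2)) = {z | Φ z ≠ 0} := by
    ext z
    simp [Function.mem_support, mul_ne_zero_iff, Real.exp_ne_zero, map_ne_zero]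
  rw [hsupp]
  obtain ⟨z, hz⟩ := Function.ne_iff.mp hne
  exact (isOpen_compl_singleton.preimage hΦ.1.continuous).measure_pos volume ⟨z, hz⟩

private lemma integrable_one_gauss :
    Integrable (fun z : ℂ =>
      ‖(fun _ : ℂ => (1:ℂ)) z‖ * Real.exp (-Real.pi * ‖z‖ ^ 2 / 2)) := by
  have h := (GaussianFourier.integrable_cexp_neg_mul_sq_norm_add
      (V := ℂ) (b := ((Real.pi/2 : ℝ) : ℂ))
      (by simp; positivity) 0 0).norm
  apply h.congr
  filter_upwards with z
  simp only [zero_mul, add_zero, Complex.norm_exp, map_one, norm_one, one_mul]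
  congr 1
  rw [show -((Real.pi/2 : ℝ):ℂ) * ((‖z‖ : ℝ) : ℂ)^2
      = ((-Real.pi * ‖z‖ ^2 / 2 : ℝ) : ℂ) from by push_cast; ring,
    Complex.ofReal_re]


/-- `F ↦ (1 - e^{-π/R²})⁻¹ (F ∗ χ_{D_{1/R}})` is the identity on `𝓕₁(ℂ)`; in particular
`‖Φ ∗ χ_{D_{1/R}}‖_{𝓛₁} = (1 - e^{-π/R²}) ‖Φ‖_{𝓛₁}` and
`ν(χ_{D_{1/R}}) = sup_{0≠Φ} ‖Φ‖/‖Φ ∗ χ_{D_{1/R}}‖ = (1 - e^{-π/R²})⁻¹`. -/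
theorem tconv_disc_indicator_identity (R : ℝ) (hR : 0 < R) :
    (∀ Φ : ℂ → ℂ, MemFock1 Φ → ∀ z : ℂ,
        Φ z = ((1 - Real.exp (-Real.pi / R ^ 2) : ℝ) : ℂ)⁻¹ *
          tconv Φ ((Metric.closedBall (0 : ℂ) (1 / R)).indicator (fun _ => (1 : ℂ))) z)
    ∧ (∀ Φ : ℂ → ℂ, MemFock1 Φ →
        fockNorm (tconv Φ ((Metric.closedBall (0 : ℂ) (1 / R)).indicator (fun _ => (1 : ℂ))))
          = (1 - Real.exp (-Real.pi / R ^ 2)) * fockNorm Φ)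
    ∧ (⨆ Φ : {Φ : ℂ → ℂ // MemFock1 Φ ∧ Φ ≠ 0},
        fockNorm Φ.1 /
          fockNorm (tconv Φ.1 ((Metric.closedBall (0 : ℂ) (1 / R)).indicator (fun _ => (1 : ℂ)))))
        = (1 - Real.exp (-Real.pi / R ^ 2))⁻¹ := by
  set c : ℝ := 1 - Real.exp (-Real.pi / R ^ 2) with hcdef
  have hexp : Real.exp (-Real.pi / R ^ 2) < 1 := by
    rw [Real.exp_lt_one_iff]
    exact div_neg_of_neg_of_pos (neg_neg_iff_pos.mpr Real.pi_pos) (by positivity)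
  have hc : 0 < c := by simp [hcdef, hexp]
  have hnorm : ∀ Φ : ℂ → ℂ, MemFock1 Φ →
      fockNorm (tconv Φ ((Metric.closedBall (0 : ℂ) (1 / R)).indicator (fun _ => (1 : ℂ))))
        = c * fockNorm Φ := by
    intro Φ hΦ
    rw [fockNorm, fockNorm]
    have heq : ∀ z : ℂ, ‖
        (tconv Φ ((Metric.closedBall (0 : ℂ) (1 / R)).indicator (fun _ => (1 : ℂ))) z)‖
          * Real.exp (-Real.pi * ‖z‖ ^ 2 / 2)
        = c * (‖Φ z‖ * Real.exp (-Real.pi * ‖z‖ ^ 2 / 2)) := by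
      intro z
      rw [tconv_eq R hR Φ hΦ.1 z, Complex.real_smul, norm_mul, Complex.norm_real, Real.norm_eq_abs,
        abs_of_pos hc]
      ring
    simp_rw [heq]
    exact MeasureTheory.integral_const_mul c _
  refine ⟨?_, fun Φ hΦ => hnorm Φ hΦ, ?_⟩
  · intro Φ hΦ z
    rw [tconv_eq R hR Φ hΦ.1 z, Complex.real_smul, ← hcdef,
      inv_mul_cancel_left₀ (Complex.ofReal_ne_zero.mpr hc.ne')]
  · have hne : Nonempty {Φ : ℂ → ℂ // MemFock1 Φ ∧ Φ ≠ 0} := by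
      refine ⟨⟨fun _ => 1, ⟨⟨differentiable_const 1, integrable_one_gauss⟩, ?_⟩⟩⟩
      intro h
      have := congrFun h 0
      simp at this
    have hconst : ∀ Φ : {Φ : ℂ → ℂ // MemFock1 Φ ∧ Φ ≠ 0},
        fockNorm Φ.1 / fockNorm (tconv Φ.1
          ((Metric.closedBall (0 : ℂ) (1 / R)).indicator (fun _ => (1 : ℂ)))) = c⁻¹ := by
      rintro ⟨Φ, hΦ, hΦne⟩
      rw [hnorm Φ hΦ]
      have hpos := fockNorm_pos Φ hΦ hΦne
      rw [div_mul_eq_div_div_swap, div_self hpos.ne', one_div]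
    simp_rw [hconst]
    exact ciSup_const
end

section
/- If δ(Δ) < 1/2, where δ(Δ) = sup_{0≠F∈𝓕₁(ℂ)} (∫_Δ |F| e^{-π|z|²/2} dA)/‖F‖_{𝓛₁}, then for any two distinct F₁, F₂ ∈ 𝓕₁(ℂ) and any function N supported on Δ with finite weighted L¹ norm, ‖(F₁ + N) - F₂‖ > ‖N‖; equivalently, F₁ is the strict unique minimizer of g ↦ ‖(F₁ + N) - g‖ over 𝓕₁(ℂ). -/
open MeasureTheory

/-- Logan's phenomenon: if `δ(Δ) < 1/2`, `F₁ ≠ F₂` in `𝓕₁(ℂ)` and `N` is supported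
on `Δ` with finite weighted L¹ norm, then `‖(F₁ + N) - F₂‖ > ‖N‖`. -/
theorem logan_phenomenon (Δ : Set ℂ) (hΔ : MeasurableSet Δ) (hδ : fockDelta Δ < 1 / 2)
    (F₁ F₂ : ℂ → ℂ) (hF₁ : MemFock1 F₁) (hF₂ : MemFock1 F₂) (hne : F₁ ≠ F₂)
    (N : ℂ → ℂ) (hNmeas : Measurable N)
    (hN1 : Integrable (fun z : ℂ => ‖N z‖ * Real.exp (-Real.pi * ‖z‖ ^ 2 / 2)))
    (hNsupp : ∀ᵐ z : ℂ, z ∉ Δ → N z = 0) :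
    fockNorm N < fockNorm (fun z => F₁ z + N z - F₂ z) := by
  set w : ℂ → ℝ := fun z => Real.exp (-Real.pi * ‖z‖ ^ 2 / 2) with hw
  have hwpos : ∀ z, 0 < w z := fun z => Real.exp_pos _
  have hwcont : Continuous w := by
    apply Real.continuous_exp.comp
    continuity
  set D : ℂ → ℂ := fun z => F₁ z - F₂ z with hDdef
  have hDdiff : Differentiable ℂ D := hF₁.1.sub hF₂.1
  have hDcont : Continuous D := hDdiff.continuous
  have hfDcont : Continuous (fun z => ‖D z‖ * w z) :=
    (continuous_norm.comp hDcont).mul hwcont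
  have hDint : Integrable (fun z => ‖D z‖ * w z) := by
    apply (hF₁.2.add hF₂.2).mono' hfDcont.aestronglyMeasurable
    filter_upwards with z
    rw [Real.norm_eq_abs, abs_of_nonneg (mul_nonneg (norm_nonneg _) (hwpos z).le)]
    have h1 : ‖D z‖ ≤ ‖F₁ z‖ + ‖F₂ z‖ := by
      simpa [hDdef] using norm_sub_le (F₁ z) (F₂ z)
    have h2 := (hwpos z).le
    simp only [Pi.add_apply, hw]
    nlinarith
  have hDNint : Integrable (fun z => ‖D z + N z‖ * w z) := by
    have hmeas : AEStronglyMeasurable (fun z => ‖D z + N z‖ * w z) volume :=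
      ((continuous_norm.measurable.comp (hDcont.measurable.add hNmeas)).mul
        hwcont.measurable).aestronglyMeasurable
    apply (hDint.add hN1).mono' hmeas
    filter_upwards with z
    rw [Real.norm_eq_abs, abs_of_nonneg (mul_nonneg (norm_nonneg _) (hwpos z).le)]
    have h1 : ‖D z + N z‖ ≤ ‖D z‖ + ‖N z‖ := by
      simpa using norm_add_le (D z) (N z)
    have h2 := (hwpos z).le
    simp only [Pi.add_apply, hw]
    nlinarith
  -- D is a nonzero element of the Fock space
  have hDne : D ≠ 0 := by
    intro h
    apply hne
    funext z
    have := congrFun h z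
    simpa [hDdef, sub_eq_zero] using this
  -- fockNorm D > 0
  have hDnorm_pos : 0 < fockNorm D := by
    rcases lt_or_eq_of_le (integral_nonneg (f := fun z => ‖D z‖ * w z) (fun z => by positivity :
        ∀ z, 0 ≤ ‖D z‖ * w z)) with h | h
    · exact h
    · exfalso
      have hzero : (fun z => ‖D z‖ * w z) =ᵐ[volume] 0 := by
        rw [← MeasureTheory.integral_eq_zero_iff_of_nonneg
          (fun z => by positivity) hDint]
        exact h.symm
      have heq : (fun z => ‖D z‖ * w z) = 0 :=
        (Continuous.ae_eq_iff_eq volume hfDcont continuous_const).mp hzero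
      apply hDne
      funext z
      have := congrFun heq z
      simp only [Pi.zero_apply, mul_eq_zero] at this
      rcases this with h' | h'
      · simpa using h'
      · exact absurd h' (ne_of_gt (hwpos z))
  set a : ℝ := ∫ z in Δ, ‖D z‖ * w z with ha
  set b : ℝ := ∫ z in Δᶜ, ‖D z‖ * w z with hb
  have hab : a + b = fockNorm D := integral_add_compl hΔ hDint
  have hbnn : 0 ≤ b := integral_nonneg (fun z => by positivity)
  -- a / fockNorm D ≤ fockDelta Δ
  have hbdd : BddAbove (Set.range fun F : {F : ℂ → ℂ // MemFock1 F ∧ F ≠ 0} =>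
      (∫ z in Δ, ‖F.1 z‖ * Real.exp (-Real.pi * ‖z‖ ^ 2 / 2)) /
        fockNorm F.1) := by
    refine ⟨1, ?_⟩
    rintro x ⟨⟨F, hF, hFne⟩, rfl⟩
    have hnum : (∫ z in Δ, ‖F z‖ * Real.exp (-Real.pi * ‖z‖ ^ 2 / 2))
        ≤ fockNorm F :=
      setIntegral_le_integral hF.2 (Filter.Eventually.of_forall fun z => by positivity)
    have hden : 0 ≤ fockNorm F := integral_nonneg (fun z => by positivity)
    exact div_le_one_of_le₀ hnum hden
  have hδD : a / fockNorm D ≤ fockDelta Δ :=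
    le_ciSup hbdd (⟨D, ⟨hDdiff, hDint⟩, hDne⟩ :
      {F : ℂ → ℂ // MemFock1 F ∧ F ≠ 0})
  have halt : a < b := by
    have h1 : a / fockNorm D < 1 / 2 := lt_of_le_of_lt hδD hδ
    have h2 : a < fockNorm D / 2 := by
      rw [div_lt_div_iff₀ hDnorm_pos (by norm_num)] at h1
      linarith
    linarith [hab]
  -- fockNorm N equals its integral over Δ
  have hNcompl : ∫ z in Δᶜ, ‖N z‖ * w z = 0 := by
    rw [setIntegral_congr_ae hΔ.compl (g := fun _ => (0 : ℝ))
      (by filter_upwards [hNsupp] with z hz hzc; simp [hz hzc])]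
    simp
  have hNΔ : ∫ z in Δ, ‖N z‖ * w z = fockNorm N := by
    have := integral_add_compl hΔ hN1
    rw [hNcompl, add_zero] at this
    exact this
  -- integral of |D+N| over Δᶜ equals b
  have hDNcompl : ∫ z in Δᶜ, ‖D z + N z‖ * w z = b := by
    rw [setIntegral_congr_ae hΔ.compl (g := fun z => ‖D z‖ * w z)
      (by filter_upwards [hNsupp] with z hz hzc; simp [hz hzc])]
  -- lower bound for the integral over Δ
  have hΔpart : fockNorm N - a ≤ ∫ z in Δ, ‖D z + N z‖ * w z := by
    have hmono : ∫ z in Δ, ‖N z‖ * w z ≤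
        ∫ z in Δ, (‖D z + N z‖ * w z + ‖D z‖ * w z) := by
      apply integral_mono hN1.integrableOn (hDNint.integrableOn.add hDint.integrableOn)
      intro z
      have h1 : ‖N z‖ ≤ ‖D z + N z‖ + ‖D z‖ := by
        have : N z = (D z + N z) - D z := by ring
        rw [this]
        simpa using norm_sub_le (D z + N z) (D z)
      have h2 := (hwpos z).le
      simp only [Pi.add_apply]
      nlinarith
    rw [integral_add hDNint.integrableOn hDint.integrableOn] at hmono
    rw [hNΔ] at hmono
    linarith [hmono]
  -- put everything together
  have hfinal : fockNorm (fun z => F₁ z + N z - F₂ z) =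
      (∫ z in Δ, ‖D z + N z‖ * w z) + b := by
    have heq : (fun z : ℂ => ‖F₁ z + N z - F₂ z‖ * w z) =
        fun z => ‖D z + N z‖ * w z := by
      funext z
      congr 1
      congr 1
      simp [hDdef]
      ring
    rw [show fockNorm (fun z => F₁ z + N z - F₂ z) =
        ∫ z, ‖D z + N z‖ * w z by
      rw [fockNorm]; exact congrArg _ heq]
    rw [← integral_add_compl hΔ hDNint, hDNcompl]
  rw [hfinal]
  linarith
end
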